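/- arXiv:1805.02661 — 7 statements merged into one kernel-verified Lean document; each statement's English description precedes it below -/
import Mathlib

section
/- Let λ ∈ ℂ with λ ≠ 0. For each d ∈ ℕ set c d = (1/(2d+1)!) · iteratedDeriv (2d+1) (fun u : ℂ => u^3 * (-u-λ)^((2*(d:ℤ)-2)) ) λ, which is the residue at u = λ of u^3(-u-λ)^{2(d-1)}/(u-λ)^{2(d+1)}. Then for every z ∈ ℂ with |z| < 1, HasSum (fun d : ℕ => z^d * c d) (1/2 + z/(1-z)). In particular the constant (classical) term equals 1/2 instead of 0, exhibiting a different classical triple intersection number. -/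
open scoped Nat
open Polynomial

lemma iteratedDeriv_polyEval (p : ℂ[X]) (n : ℕ) :
    iteratedDeriv n (fun x => p.eval x) = fun x => (derivative^[n] p).eval x := by
  induction n with
  | zero => simp
  | succ n ih =>
    rw [iteratedDeriv_succ, ih]
    funext x
    rw [Function.iterate_succ_apply']
    exact Polynomial.deriv _

theorem stmt1 (Λ : ℂ) (hΛ : Λ ≠ 0) (c : ℕ → ℂ)
    (hc : ∀ d : ℕ, c d = (1 / ((2*d+1)! : ℂ)) *
      iteratedDeriv (2*d+1) (fun u : ℂ => u^3 * (-u-Λ)^(2*(d:ℤ)-2)) Λ) :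
    ∀ z : ℂ, ‖z‖ < 1 →
      HasSum (fun d : ℕ => z^d * c d) (1/2 + z/(1-z)) := by
  -- c 0 = 1/2
  have hc0 : c 0 = 1/2 := by
    have h1 : HasDerivAt (fun u : ℂ => -u - Λ) (-1) Λ := by
      simpa using ((hasDerivAt_id Λ).neg.sub_const Λ)
    have hne : -Λ - Λ ≠ 0 := by
      intro h; apply hΛ; have : (-2 : ℂ) * Λ = 0 := by linear_combination h
      simpa using (mul_eq_zero.mp this).resolve_left (by norm_num)
    have h2 : HasDerivAt (fun u : ℂ => (-u - Λ)^(-2 : ℤ))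
        (((-2 : ℤ) * (-Λ - Λ)^(-2 - 1 : ℤ)) * (-1)) Λ := by
      have := HasDerivAt.comp (h₂ := fun x : ℂ => x^(-2 : ℤ))
        (h := fun u : ℂ => -u - Λ) Λ (hasDerivAt_zpow (-2) (-Λ - Λ) (Or.inl hne)) h1
      simpa [Function.comp_def] using this
    have h3 : HasDerivAt (fun u : ℂ => u^3) (3 * Λ^2) Λ := by
      simpa using hasDerivAt_pow 3 Λ
    have h4 := h3.mul h2
    have hd : deriv (fun u : ℂ => u^3 * (-u - Λ)^(-2 : ℤ)) Λ =
        3 * Λ^2 * (-Λ - Λ)^(-2 : ℤ) + Λ^3 * (((-2 : ℤ) * (-Λ - Λ)^(-2 - 1 : ℤ)) * (-1)) := by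
      simpa [Pi.mul_def] using h4.deriv
    have hval : (3 : ℂ) * Λ^2 * (-Λ - Λ)^(-2 : ℤ) + Λ^3 * (((-2 : ℤ) * (-Λ - Λ)^(-2 - 1 : ℤ)) * (-1)) = 1/2 := by
      have h2' : (-Λ - Λ)^(-2 : ℤ) = ((4:ℂ)*Λ^2)⁻¹ := by
        rw [show (-Λ - Λ : ℂ) = -(2*Λ) by ring, zpow_neg]
        rw [show ((2:ℤ)) = ((2:ℕ):ℤ) by norm_num, zpow_natCast]
        congr 1; ring
      have h3' : (-Λ - Λ)^(-2 - 1 : ℤ) = (-((8:ℂ)*Λ^3))⁻¹ := by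
        rw [show (-Λ - Λ : ℂ) = -(2*Λ) by ring, show (-2-1 : ℤ) = -3 by norm_num, zpow_neg]
        rw [show ((3:ℤ)) = ((3:ℕ):ℤ) by norm_num, zpow_natCast]
        congr 1; ring
      rw [h2', h3']
      have e2 : (Λ:ℂ)^2 ≠ 0 := pow_ne_zero _ hΛ
      have e3 : (Λ:ℂ)^3 ≠ 0 := pow_ne_zero _ hΛ
      push_cast
      field_simp
      ring
    have := hc 0
    simp only [Nat.mul_zero, Nat.zero_add, Nat.cast_zero] at this
    rw [this]
    have hexp : (2 * (0:ℤ) - 2) = (-2 : ℤ) := by norm_num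
    rw [hexp, iteratedDeriv_one, hd, hval]
    norm_num
  -- c (k+1) = 1
  have hc1 : ∀ k : ℕ, c (k + 1) = 1 := by
    intro k
    have hfun : (fun u : ℂ => u^3 * (-u - Λ)^(2*((k+1:ℕ):ℤ)-2)) =
        fun u : ℂ => (X^3 * (X + C Λ)^(2*k) : ℂ[X]).eval u := by
      funext u
      have he : (2*((k+1:ℕ):ℤ)-2) = ((2*k : ℕ) : ℤ) := by push_cast; ring
      rw [he, zpow_natCast]
      have : (-u - Λ)^(2*k) = (u + Λ)^(2*k) := by
        rw [show -u - Λ = -(u + Λ) by ring]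
        exact (even_two_mul k).neg_pow _
      simp [this]
    set p : ℂ[X] := X^3 * (X + C Λ)^(2*k) with hp
    have hmon : p.Monic := (monic_X_pow 3).mul ((monic_X_add_C Λ).pow _)
    have hdeg : p.natDegree = 2*k + 3 := by
      rw [hp, (monic_X_pow 3).natDegree_mul ((monic_X_add_C Λ).pow _)]
      simp [natDegree_X_pow, natDegree_pow]
      ring
    set N := 2*(k+1)+1 with hN
    have hNd : N = 2*k + 3 := by omega
    have hdz : (derivative^[N] p).natDegree = 0 := by
      have := natDegree_iterate_derivative p N
      omega
    have hconst : derivative^[N] p = C ((derivative^[N] p).coeff 0) :=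
      (Polynomial.eq_C_of_natDegree_eq_zero hdz)
    have hcoeff : (derivative^[N] p).coeff 0 = (N ! : ℂ) := by
      rw [Polynomial.coeff_iterate_derivative]
      simp only [Nat.zero_add, Nat.descFactorial_self]
      have : p.coeff N = 1 := by
        rw [hNd, ← hdeg]; exact hmon.coeff_natDegree
      rw [this]
      simp
    have hN0 : ((N ! : ℕ) : ℂ) ≠ 0 := by
      exact_mod_cast Nat.cast_ne_zero.mpr (Nat.factorial_ne_zero N)
    rw [hc (k+1)]
    have : (2*(k+1)+1) = N := rfl
    rw [this, hfun, iteratedDeriv_polyEval, hconst, hcoeff]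
    simp only [eval_C]
    field_simp
  -- summation
  intro z hz
  have hzn : ‖z‖ < 1 := hz
  have hg : HasSum (fun d : ℕ => z^d) (1 - z)⁻¹ := hasSum_geometric_of_norm_lt_one hzn
  have hsingle : HasSum (fun d : ℕ => if d = 0 then (1/2 : ℂ) else 0) (1/2) := by
    simpa using hasSum_ite_eq 0 (1/2 : ℂ)
  have hsub := hg.sub hsingle
  have hone : (1 : ℂ) - z ≠ 0 := by
    intro h
    have : z = 1 := by linear_combination -h
    rw [this] at hz; simp at hz
  have hfeq : (fun d : ℕ => z^d - if d = 0 then (1/2 : ℂ) else 0) =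
      fun d : ℕ => z^d * c d := by
    funext d
    cases d with
    | zero => simp [hc0]; norm_num
    | succ k => simp [hc1 k]
  rw [hfeq] at hsub
  have hveq : (1 - z)⁻¹ - 1/2 = 1/2 + z/(1-z) := by
    field_simp
    ring
  rwa [hveq] at hsub
end

section
/- Let λ ∈ ℂ with λ ≠ 0. For each d ∈ ℕ set c d = (1/(2d+1)!) · iteratedDeriv (2d+1) (fun u : ℂ => u^3 * (-2*u)^((2*(d:ℤ)-1)) / (2*λ)) λ, which is the residue at u = λ of u^3(-2u)^{2d-1}/(2λ(u-λ)^{2(d+1)}). Then for every z ∈ ℂ with |z| < 1/4, HasSum (fun d : ℕ => z^d * c d) (-1/(2*(1-4*z)^2)). -/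
open scoped Nat

lemma itder_pow (a : ℂ) (n : ℕ) : ∀ k : ℕ, iteratedDeriv k (fun u : ℂ => a * u^n)
    = fun u : ℂ => a * (n.descFactorial k : ℂ) * u^(n-k) := by
  intro k
  induction k with
  | zero => simp
  | succ k ih =>
    rw [iteratedDeriv_succ, ih]
    funext u
    rw [deriv_const_mul _ (differentiable_pow _ |>.differentiableAt)]
    rw [deriv_pow_field]
    rcases le_or_gt n k with h | h
    · simp [Nat.sub_eq_zero_of_le h, Nat.descFactorial_eq_zero_iff_lt.2 (Nat.lt_succ_of_le h)]
    · rw [Nat.descFactorial_succ]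
      push_cast [Nat.sub_sub]
      ring

lemma c_val (Λ : ℂ) (hΛ : Λ ≠ 0) (d : ℕ) :
    (1 / ((2*d+1)! : ℂ)) *
      iteratedDeriv (2*d+1) (fun u : ℂ => u^3 * (-2*u)^(2*(d:ℤ)-1) / (2*Λ)) Λ
    = -((d:ℂ)+1) * 4^d / 2 := by
  rcases d with _ | e
  · -- d = 0
    have hfg : (fun u : ℂ => u^3 * (-2*u)^(2*((0:ℕ):ℤ)-1) / (2*Λ))
        =ᶠ[nhds Λ] (fun u : ℂ => -u^2/(4*Λ)) := by
      filter_upwards [IsOpen.mem_nhds isOpen_compl_singleton hΛ] with u hu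
      have hu' : (u : ℂ) ≠ 0 := hu
      simp only [Nat.cast_zero, mul_zero, zero_sub, zpow_neg, zpow_one]
      field_simp
      ring
    have : iteratedDeriv 1 (fun u : ℂ => u^3 * (-2*u)^(2*((0:ℕ):ℤ)-1) / (2*Λ)) Λ
        = deriv (fun u : ℂ => -u^2/(4*Λ)) Λ := by
      rw [iteratedDeriv_one]
      exact hfg.deriv_eq
    rw [show (2*0+1 : ℕ) = 1 by norm_num] at *
    rw [this]
    have : deriv (fun u : ℂ => -u^2/(4*Λ)) Λ = -2*Λ/(4*Λ) := by
      have : (fun u : ℂ => -u^2/(4*Λ)) = fun u : ℂ => (-(4*Λ)⁻¹) * u^2 := by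
        funext u; field_simp
      rw [this, deriv_const_mul _ (differentiable_pow 2 |>.differentiableAt), deriv_pow_field]
      field_simp
      norm_num; ring
    rw [this]
    field_simp
    ring
  · -- d = e+1
    set d := e + 1
    have hexp : (2*(d:ℤ)-1) = ((2*d-1 : ℕ) : ℤ) := by
      push_cast [d]; omega
    have hfun : (fun u : ℂ => u^3 * (-2*u)^(2*(d:ℤ)-1) / (2*Λ))
        = fun u : ℂ => ((-2:ℂ)^(2*d-1) / (2*Λ)) * u^(2*d+2) := by
      funext u
      rw [hexp, zpow_natCast, mul_pow]
      have : (3 : ℕ) + (2*d-1) = 2*d+2 := by omega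
      rw [show u^3 * ((-2:ℂ)^(2*d-1) * u^(2*d-1)) = (-2:ℂ)^(2*d-1) * (u^3 * u^(2*d-1)) by ring,
        ← pow_add, this]
      ring
    rw [hfun, itder_pow]
    have h1 : (2*d+2) - (2*d+1) = 1 := by omega
    have hds : ∀ n : ℕ, (n+1).descFactorial n = (n+1)! := by
      intro n
      induction n with
      | zero => simp
      | succ m ih =>
        rw [Nat.succ_descFactorial_succ, ih, Nat.factorial_succ (m+1)]
    have h2 : (2*d+2).descFactorial (2*d+1) = (2*d+2)! := hds (2*d+1)
    rw [h1, h2]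
    simp only [pow_one]
    have h3 : ((2*d+2)! : ℂ) = (2*(d:ℂ)+2) * ((2*d+1)! : ℂ) := by
      rw [show (2*d+2) = (2*d+1)+1 from rfl, Nat.factorial_succ]; push_cast; ring
    have hfac : ((2*d+1)! : ℂ) ≠ 0 := Nat.cast_ne_zero.2 (Nat.factorial_ne_zero _)
    have hodd : (-2:ℂ)^(2*d-1) = -(2:ℂ)^(2*d-1) := by
      rw [neg_pow]
      have : Odd (2*d-1) := ⟨d-1, by omega⟩
      rw [this.neg_one_pow]; ring
    have h4 : (2:ℂ)^(2*d-1) * 2 = 4^d := by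
      rw [← pow_succ, show 2*d-1+1 = 2*d by omega, pow_mul]; norm_num
    have key : ((-2):ℂ)^(2*d-1) * (2*(d:ℂ)+2) = -((d:ℂ)+1)*4^d * 1 := by
      rw [hodd]
      linear_combination (-((d:ℂ)+1)) * h4
    have step : (1 / ((2*d+1)! : ℂ)) * ((-2:ℂ)^(2*d-1)/(2*Λ) * ((2*d+2)! : ℂ) * Λ)
        = ((-2:ℂ)^(2*d-1) * (2*(d:ℂ)+2))/2 := by
      rw [h3]; field_simp
    rw [step, key]
    push_cast
    ring

theorem stmt2 (Λ : ℂ) (hΛ : Λ ≠ 0) (c : ℕ → ℂ)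
    (hc : ∀ d : ℕ, c d = (1 / ((2*d+1)! : ℂ)) *
      iteratedDeriv (2*d+1) (fun u : ℂ => u^3 * (-2*u)^(2*(d:ℤ)-1) / (2*Λ)) Λ) :
    ∀ z : ℂ, ‖z‖ < 1/4 →
      HasSum (fun d : ℕ => z^d * c d) (-1/(2*(1-4*z)^2)) := by
  intro z hz
  have hc' : ∀ d, c d = -((d:ℂ)+1) * 4^d / 2 := fun d => (hc d).trans (c_val Λ hΛ d)
  have hr : ‖(4*z : ℂ)‖ < 1 := by
    rw [norm_mul]
    have : ‖z‖ < 1/4 := hz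
    calc ‖(4:ℂ)‖ * ‖z‖ = 4 * ‖z‖ := by norm_num
    _ < 4 * (1/4) := by nlinarith [norm_nonneg z]
    _ = 1 := by norm_num
  have h1 := hasSum_coe_mul_geometric_of_norm_lt_one (r := (4*z:ℂ)) hr
  have h2 := hasSum_geometric_of_norm_lt_one (ξ := (4*z:ℂ)) hr
  have h3 := (h1.add h2).mul_left (-(1/2) : ℂ)
  have hne : (1 - 4*z : ℂ) ≠ 0 := by
    intro h
    have : ‖(4*z : ℂ)‖ = 1 := by
      have : (4*z : ℂ) = 1 := by linear_combination -h
      rw [this]; simp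
    linarith
  convert h3 using 1
  · rfl
  · funext d
    rw [hc' d]
    rw [mul_pow]
    ring
  · field_simp
    ring
end

section
/- For every real z with |z| < 1/4, HasSum (fun d : ℕ => (((2*d+1)! : ℝ) / (((d+1)! : ℝ))^2) * z^(d+1)) (-Real.log ((1 + Real.sqrt (1 - 4*z)) / 2)). Equivalently, the mirror map of O(0)⊕O(-2)→P^1, log q = log z + 2·∑_{d≥1} ((2d-1)!/(d!)^2) z^d, equals log z - 2 log((1+√(1-4z))/2). -/
open scoped Nat

noncomputable def cb (n : ℕ) : ℝ := (Nat.centralBinom n : ℝ)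

lemma cb_pos (n : ℕ) : 0 < cb n := by
  unfold cb; exact_mod_cast Nat.centralBinom_pos n

lemma cb_le (n : ℕ) : cb n ≤ 4 ^ n := by
  have h : Nat.centralBinom n ≤ (2 * n + 1).choose n :=
    Nat.choose_le_choose n (Nat.le_succ _)
  have h2 := Nat.choose_middle_le_pow n
  have h3 : Nat.centralBinom n ≤ 4 ^ n := h.trans h2
  unfold cb; exact_mod_cast h3

lemma cb_rec (n : ℕ) : ((n:ℝ)+1) * cb (n+1) = 2*(2*(n:ℝ)+1) * cb n := by
  have := Nat.succ_mul_centralBinom_succ n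
  have h : ((n+1) * Nat.centralBinom (n+1) : ℝ) = (2 * (2*n+1) * Nat.centralBinom n : ℝ) := by
    exact_mod_cast congrArg (Nat.cast : ℕ → ℝ) this
  unfold cb
  push_cast at h ⊢
  linarith

lemma summable_aux {q : ℝ} (hq : |q| < 1) : Summable (fun n : ℕ => ((n:ℝ)+1) * q^n) := by
  have h1 : Summable (fun n : ℕ => (n:ℝ)^1 * q^n) :=
    summable_pow_mul_geometric_of_norm_lt_one 1 (by rwa [Real.norm_eq_abs])
  have h2 : Summable (fun n : ℕ => q^n) := summable_geometric_of_abs_lt_one hq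
  simpa [pow_one, add_mul] using h1.add h2

-- Summable (fun n => n * q^(n-1))
lemma summable_aux2 {q : ℝ} (hq : |q| < 1) : Summable (fun n : ℕ => (n:ℝ) * q^(n-1)) := by
  rw [← summable_nat_add_iff 1]
  simpa [Nat.add_sub_cancel] using summable_aux hq

lemma summable_cb {x : ℝ} (hx : |x| < 1/4) : Summable (fun n : ℕ => cb n * x ^ n) := by
  have hg : Summable (fun n : ℕ => (4 * |x|) ^ n) := by
    apply summable_geometric_of_lt_one (by positivity)
    linarith
  apply Summable.of_norm_bounded hg
  intro n
  rw [Real.norm_eq_abs, abs_mul, abs_of_pos (cb_pos n), abs_pow, mul_pow]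
  exact mul_le_mul_of_nonneg_right (cb_le n) (by positivity)

lemma summable_cb_deriv {r : ℝ} (h0 : 0 ≤ r) (hr : r < 1/4) :
    Summable (fun n : ℕ => cb n * ((n:ℝ) * r ^ (n-1))) := by
  have h4r : |4 * r| < 1 := by rw [abs_of_nonneg (by positivity)]; linarith
  have hb : Summable (fun n : ℕ => 4 * ((n:ℝ) * (4*r) ^ (n-1))) :=
    (summable_aux2 h4r).mul_left 4
  apply Summable.of_nonneg_of_le
    (fun n => mul_nonneg (cb_pos n).le (by positivity)) ?_ hb
  intro n
  cases n with
  | zero => simp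
  | succ m =>
    simp only [Nat.add_sub_cancel]
    have h1 : cb (m+1) ≤ 4 ^ (m+1) := cb_le (m+1)
    have h2 : (4*r) ^ m = 4 ^ m * r ^ m := mul_pow 4 r m
    have h3 : (0:ℝ) ≤ ((m:ℝ)+1) * r ^ m := by positivity
    push_cast
    calc cb (m+1) * (((m:ℝ)+1) * r ^ m) ≤ 4 ^ (m+1) * (((m:ℝ)+1) * r ^ m) :=
          mul_le_mul_of_nonneg_right h1 h3
      _ = 4 * (((m:ℝ)+1) * (4*r) ^ m) := by rw [h2]; ring

lemma hasSum_cb {x : ℝ} (hx : |x| < 1/4) :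
    HasSum (fun n : ℕ => cb n * x ^ n) (1 / Real.sqrt (1 - 4*x)) := by
  suffices htsum : (∑' n : ℕ, cb n * x ^ n) = 1 / Real.sqrt (1 - 4*x) by
    rw [← htsum]; exact (summable_cb hx).hasSum
  set r : ℝ := (|x| + 1/4)/2 with hrdef
  have habs0 := abs_nonneg x
  have hxr : |x| < r := by rw [hrdef]; linarith
  have hr4 : r < 1/4 := by rw [hrdef]; linarith
  have hr0 : 0 < r := by rw [hrdef]; linarith
  set t := Set.Ioo (-r) r with htdef
  have ht : IsOpen t := isOpen_Ioo
  have htc : Convex ℝ t := convex_Ioo _ _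
  have h0t : (0:ℝ) ∈ t := ⟨by linarith, hr0⟩
  have hxt : x ∈ t := by
    have := abs_lt.mp hxr; exact ⟨this.1, this.2⟩
  have habs : ∀ y ∈ t, |y| < 1/4 := by
    intro y hy
    have : |y| < r := abs_lt.mpr ⟨hy.1, hy.2⟩
    linarith
  have habsr : ∀ y ∈ t, |y| ≤ r := by
    intro y hy; exact (abs_lt.mpr ⟨hy.1, hy.2⟩).le
  have hu : Summable (fun n : ℕ => cb n * ((n:ℝ) * r ^ (n-1))) :=
    summable_cb_deriv hr0.le hr4
  have hbound : ∀ (n : ℕ), ∀ y ∈ t, ‖cb n * ((n:ℝ) * y ^ (n-1))‖ ≤ cb n * ((n:ℝ) * r ^ (n-1)) := by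
    intro n y hy
    rw [Real.norm_eq_abs, abs_mul, abs_mul, abs_pow, abs_of_pos (cb_pos n),
      Nat.abs_cast]
    apply mul_le_mul_of_nonneg_left _ (cb_pos n).le
    apply mul_le_mul_of_nonneg_left _ (Nat.cast_nonneg n)
    exact pow_le_pow_left₀ (abs_nonneg y) (habsr y hy) _
  have hsum0 : Summable (fun n : ℕ => cb n * (0:ℝ) ^ n) := summable_cb (by norm_num)
  have hderivW : ∀ y ∈ t, HasDerivAt (fun z => ∑' n : ℕ, cb n * z ^ n)
      (∑' n : ℕ, cb n * ((n:ℝ) * y ^ (n-1))) y := by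
    intro y hy
    exact hasDerivAt_tsum_of_isPreconnected hu ht htc.isPreconnected
      (fun n z _ => (hasDerivAt_pow n z).const_mul (cb n))
      (fun n z hz => hbound n z hz) h0t hsum0 hy
  have hrel : ∀ y ∈ t, (1-4*y) * (∑' n : ℕ, cb n * ((n:ℝ) * y ^ (n-1)))
      = 2 * ∑' n : ℕ, cb n * y ^ n := by
    intro y hy
    have hy4 := habs y hy
    have hDsum : Summable (fun n : ℕ => cb n * ((n:ℝ) * y ^ (n-1))) :=
      hu.of_norm_bounded (fun n => hbound n y hy)
    have hD := hDsum.hasSum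
    have hW := (summable_cb hy4).hasSum
    have hC := (hD.mul_left (1-4*y)).sub (hW.mul_left 2)
    set A : ℕ → ℝ := fun n => (n:ℝ) * cb n * y ^ (n-1) with hA
    have hterm : ∀ n : ℕ, (1-4*y) * (cb n * ((n:ℝ) * y ^ (n-1))) - 2 * (cb n * y ^ n)
        = A n - A (n+1) := by
      intro n
      cases n with
      | zero =>
        have h1 : cb 0 = 1 := by unfold cb; norm_num [Nat.centralBinom_zero]
        have h2 : cb 1 = 2 := by unfold cb; norm_num [Nat.centralBinom]
        simp [hA, h1, h2]
      | succ m =>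
        have h2 := cb_rec (m+1)
        simp only [hA, Nat.add_sub_cancel]
        push_cast at h2 ⊢
        linear_combination (y ^ (m+1)) * h2
    have heq : (fun n : ℕ => (1-4*y) * (cb n * ((n:ℝ) * y ^ (n-1))) - 2 * (cb n * y ^ n))
        = fun n => A n - A (n+1) := funext hterm
    rw [heq] at hC
    have hps : ∀ N, ∑ n ∈ Finset.range N, (A n - A (n+1)) = A 0 - A N :=
      fun N => Finset.sum_range_sub' A N
    have hA0 : A 0 = 0 := by simp [hA]
    have hAlim : Filter.Tendsto A Filter.atTop (nhds 0) := by
      have hsum' : Summable (fun n : ℕ => cb n * ((n:ℝ) * |y| ^ (n-1))) :=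
        summable_cb_deriv (abs_nonneg y) hy4
      apply squeeze_zero_norm _ hsum'.tendsto_atTop_zero
      intro n
      rw [Real.norm_eq_abs, hA, abs_mul, abs_mul, abs_pow, abs_of_pos (cb_pos n), Nat.abs_cast]
      ring_nf
      exact le_refl _
    have hlim0 : Filter.Tendsto (fun N => ∑ n ∈ Finset.range N, (A n - A (n+1)))
        Filter.atTop (nhds 0) := by
      simp only [hps, hA0, zero_sub]
      simpa using hAlim.neg
    have h0 : (1-4*y) * (∑' n : ℕ, cb n * ((n:ℝ) * y ^ (n-1)))
        - 2 * (∑' n : ℕ, cb n * y ^ n) = 0 := by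
      have := hC.tendsto_sum_nat
      exact tendsto_nhds_unique this hlim0
    linarith
  set f : ℝ → ℝ := fun y => (∑' n : ℕ, cb n * y ^ n) * Real.sqrt (1 - 4*y) with hfdef
  have hconst : ∀ y ∈ t, HasDerivAt f 0 y := by
    intro y hy
    have hy4' := habs y hy
    have hy4 : (0:ℝ) < 1 - 4*y := by
      have := abs_lt.mp hy4'; linarith
    have hs0 : 0 < Real.sqrt (1-4*y) := Real.sqrt_pos.mpr hy4
    have hs2 : Real.sqrt (1-4*y) ^ 2 = 1-4*y := Real.sq_sqrt hy4.le
    have hinner : HasDerivAt (fun z : ℝ => 1 - 4*z) (-4) y := by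
      simpa using ((hasDerivAt_id' y).const_mul 4).const_sub 1
    have hsd : HasDerivAt (fun z => Real.sqrt (1 - 4*z)) (-2 / Real.sqrt (1-4*y)) y := by
      have h := (Real.hasDerivAt_sqrt hy4.ne').comp y hinner
      refine h.congr_deriv (Eq.symm ?_)
      field_simp
      ring
    have hWd := hderivW y hy
    have hmul := hWd.mul hsd
    refine hmul.congr_deriv (Eq.symm ?_)
    have hr := hrel y hy
    rw [eq_comm]
    have hs0' : Real.sqrt (1-4*y) ≠ 0 := hs0.ne'
    have hss : Real.sqrt (1-4*y) * Real.sqrt (1-4*y) = 1 - 4*y := Real.mul_self_sqrt hy4.le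
    set D := ∑' (n : ℕ), cb n * ((n:ℝ) * y ^ (n - 1)) with hDdef
    field_simp
    linear_combination D * hss + hr
  have key : f x = f 0 := by
    apply htc.is_const_of_fderivWithin_eq_zero
      (fun y hy => ((hconst y hy).differentiableAt).differentiableWithinAt) ?_ hxt h0t
    intro y hy
    rw [fderivWithin_of_isOpen ht hy]
    have hd := (hconst y hy).hasFDerivAt
    rw [hd.fderiv]
    ext
    simp
  have hW0 : (∑' n : ℕ, cb n * (0:ℝ) ^ n) = 1 := by
    rw [tsum_eq_single 0 (fun n hn => by simp [zero_pow hn])]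
    unfold cb; norm_num [Nat.centralBinom_zero]
  have hf0 : f 0 = 1 := by
    rw [hfdef]; simp [hW0]
  have hsx : 0 < Real.sqrt (1 - 4*x) := by
    apply Real.sqrt_pos.mpr
    have := abs_lt.mp hx; linarith
  have hfx : (∑' n : ℕ, cb n * x ^ n) * Real.sqrt (1 - 4*x) = 1 := by
    have h := key.trans hf0
    simpa [hfdef] using h
  rw [eq_div_iff hsx.ne']
  exact hfx

lemma cb_zero : cb 0 = 1 := by unfold cb; norm_num [Nat.centralBinom_zero]
lemma cb_one : cb 1 = 2 := by unfold cb; norm_num [Nat.centralBinom]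

noncomputable def ac (n : ℕ) : ℝ := cb (n+1) / (2*((n:ℝ)+1))

lemma ac_eq (n : ℕ) : ac n = ((2*n+1)! : ℝ) / (((n+1)! : ℝ))^2 := by
  have h := Nat.choose_mul_factorial_mul_factorial (show n+1 ≤ 2*(n+1) by omega)
  have h2 : (2*(n+1)) - (n+1) = n+1 := by omega
  rw [h2] at h
  have hcb : Nat.centralBinom (n+1) * (n+1)! * (n+1)! = (2*(n+1))! := h
  have hfac : (2*(n+1))! = (2*n+2) * (2*n+1)! := by
    have he : 2*(n+1) = (2*n+1)+1 := by ring
    rw [he, Nat.factorial_succ]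
  rw [hfac] at hcb
  have hR : (Nat.centralBinom (n+1) : ℝ) * ((n+1)! : ℝ) * ((n+1)! : ℝ)
      = ((2*n+2 : ℕ):ℝ) * ((2*n+1)! : ℝ) := by exact_mod_cast congrArg (Nat.cast : ℕ → ℝ) hcb
  push_cast at hR
  have hfpos : (0:ℝ) < ((n+1)! : ℝ) := by exact_mod_cast (n+1).factorial_pos
  unfold ac cb
  have hn1 : ((n:ℝ)+1) ≠ 0 := by positivity
  field_simp
  push_cast
  linear_combination hR

lemma ac_le (n : ℕ) : ac n ≤ 4 ^ (n+1) := by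
  unfold ac
  have h1 : cb (n+1) ≤ 4 ^ (n+1) := cb_le (n+1)
  have h2 : (1:ℝ) ≤ 2*((n:ℝ)+1) := by
    have : (0:ℝ) ≤ (n:ℝ) := Nat.cast_nonneg n
    linarith
  have h3 : (0:ℝ) < 2*((n:ℝ)+1) := by positivity
  rw [div_le_iff₀ h3]
  nlinarith [cb_pos (n+1), pow_pos (show (0:ℝ) < 4 by norm_num) (n+1)]

lemma ac_pos (n : ℕ) : 0 < ac n := by
  unfold ac
  apply div_pos (cb_pos _) (by positivity)

lemma summable_ac {z : ℝ} (hz : |z| < 1/4) : Summable (fun n : ℕ => ac n * z ^ (n+1)) := by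
  have hg : Summable (fun n : ℕ => (4*|z|) * (4 * |z|) ^ n) := by
    apply Summable.mul_left
    apply summable_geometric_of_lt_one (by positivity)
    linarith
  apply Summable.of_norm_bounded hg
  intro n
  rw [Real.norm_eq_abs, abs_mul, abs_of_pos (ac_pos n), abs_pow]
  calc ac n * |z| ^ (n+1) ≤ 4 ^ (n+1) * |z| ^ (n+1) :=
        mul_le_mul_of_nonneg_right (ac_le n) (by positivity)
    _ = (4*|z|) * (4*|z|) ^ n := by rw [← mul_pow]; ring

lemma summable_ac_deriv {r : ℝ} (h0 : 0 ≤ r) (hr : r < 1/4) :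
    Summable (fun n : ℕ => cb (n+1)/2 * r ^ n) := by
  have hg : Summable (fun n : ℕ => 8 * (4 * r) ^ n) := by
    apply Summable.mul_left
    apply summable_geometric_of_lt_one (by positivity)
    linarith
  apply Summable.of_nonneg_of_le
    (fun n => mul_nonneg (div_nonneg (cb_pos _).le (by norm_num)) (pow_nonneg h0 n)) ?_ hg
  intro n
  have h1 : cb (n+1) ≤ 4 ^ (n+1) := cb_le (n+1)
  have h2 : (0:ℝ) ≤ r ^ n := pow_nonneg h0 n
  calc cb (n+1)/2 * r ^ n ≤ 4 ^ (n+1)/2 * r ^ n := by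
        apply mul_le_mul_of_nonneg_right _ h2
        linarith
    _ = 2 * ((4:ℝ) ^ n * r ^ n) := by rw [pow_succ]; ring
    _ ≤ 8 * ((4:ℝ) ^ n * r ^ n) := by
        nlinarith [mul_nonneg (pow_nonneg (show (0:ℝ) ≤ 4 by norm_num) n) h2]
    _ = 8 * (4*r) ^ n := by rw [mul_pow]

set_option maxHeartbeats 1000000 in
theorem stmt3' : ∀ z : ℝ, |z| < 1/4 →
    HasSum (fun d : ℕ => ac d * z^(d+1))
      (-Real.log ((1 + Real.sqrt (1 - 4*z)) / 2)) := by
  intro z hz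
  suffices h : (∑' n : ℕ, ac n * z ^ (n+1)) = -Real.log ((1 + Real.sqrt (1-4*z))/2) by
    rw [← h]; exact (summable_ac hz).hasSum
  set r : ℝ := (|z| + 1/4)/2 with hrdef
  have habs0 := abs_nonneg z
  have hzr : |z| < r := by rw [hrdef]; linarith
  have hr4 : r < 1/4 := by rw [hrdef]; linarith
  have hr0 : 0 < r := by rw [hrdef]; linarith
  set t := Set.Ioo (-r) r with htdef
  have ht : IsOpen t := isOpen_Ioo
  have htc : Convex ℝ t := convex_Ioo _ _
  have h0t : (0:ℝ) ∈ t := ⟨by linarith, hr0⟩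
  have hzt : z ∈ t := by
    have := abs_lt.mp hzr; exact ⟨this.1, this.2⟩
  have habs : ∀ y ∈ t, |y| < 1/4 := by
    intro y hy
    have : |y| < r := abs_lt.mpr ⟨hy.1, hy.2⟩
    linarith
  have habsr : ∀ y ∈ t, |y| ≤ r := by
    intro y hy; exact (abs_lt.mpr ⟨hy.1, hy.2⟩).le
  have hpos4 : ∀ y ∈ t, (0:ℝ) < 1 - 4*y := by
    intro y hy
    have := abs_lt.mp (habs y hy); linarith
  have hu : Summable (fun n : ℕ => cb (n+1)/2 * r ^ n) := summable_ac_deriv hr0.le hr4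
  have hbound : ∀ (n : ℕ), ∀ y ∈ t, ‖cb (n+1)/2 * y ^ n‖ ≤ cb (n+1)/2 * r ^ n := by
    intro n y hy
    rw [Real.norm_eq_abs, abs_mul, abs_pow, abs_of_pos (div_pos (cb_pos _) two_pos)]
    apply mul_le_mul_of_nonneg_left _ (div_pos (cb_pos _) two_pos).le
    exact pow_le_pow_left₀ (abs_nonneg y) (habsr y hy) _
  have hsum0 : Summable (fun n : ℕ => ac n * (0:ℝ) ^ (n+1)) := by
    simp only [zero_pow (Nat.succ_ne_zero _), mul_zero]
    exact summable_zero
  have hderivF : ∀ y ∈ t, HasDerivAt (fun w => ∑' n : ℕ, ac n * w ^ (n+1))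
      (∑' n : ℕ, cb (n+1)/2 * y ^ n) y := by
    intro y hy
    have hg : ∀ (n : ℕ) (w : ℝ), w ∈ t → HasDerivAt (fun v : ℝ => ac n * v ^ (n+1))
        (cb (n+1)/2 * w ^ n) w := by
      intro n w _
      have h := (hasDerivAt_pow (n+1) w).const_mul (ac n)
      have he : ac n * (((n:ℕ)+1 : ℕ) * w ^ (n+1-1)) = cb (n+1)/2 * w ^ n := by
        simp only [Nat.add_sub_cancel]
        unfold ac
        have hn1 : ((n:ℝ)+1) ≠ 0 := by positivity
        push_cast
        field_simp
      rw [he] at h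
      exact h
    exact hasDerivAt_tsum_of_isPreconnected hu ht htc.isPreconnected hg
      (fun n w hw => hbound n w hw) h0t hsum0 hy
  have hD2 : ∀ y ∈ t, (∑' n : ℕ, cb (n+1)/2 * y ^ n)
      = 2 / (Real.sqrt (1-4*y) * (1 + Real.sqrt (1-4*y))) := by
    intro y hy
    have hy4 := hpos4 y hy
    have hs0 : 0 < Real.sqrt (1-4*y) := Real.sqrt_pos.mpr hy4
    by_cases hy0 : y = 0
    · subst hy0
      rw [tsum_eq_single 0 (fun n hn => by simp [zero_pow hn])]
      norm_num [cb_one]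
    · have hW := hasSum_cb (habs y hy)
      have h1 : HasSum (fun n : ℕ => cb (n+1) * y ^ (n+1)) (1/Real.sqrt (1-4*y) - 1) := by
        apply (hasSum_nat_add_iff (f := fun n : ℕ => cb n * y ^ n) 1).mpr
        simpa [cb_zero] using hW
      have h2 := h1.mul_left (1/(2*y))
      have heq : (fun n : ℕ => 1/(2*y) * (cb (n+1) * y ^ (n+1)))
          = fun n : ℕ => cb (n+1)/2 * y ^ n := by
        funext n
        rw [pow_succ]
        field_simp
      rw [heq] at h2
      rw [h2.tsum_eq]
      have hss : Real.sqrt (1-4*y) * Real.sqrt (1-4*y) = 1 - 4*y := Real.mul_self_sqrt hy4.le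
      have h1s : (0:ℝ) < 1 + Real.sqrt (1-4*y) := by linarith
      set s := Real.sqrt (1-4*y) with hsdef
      field_simp
      linear_combination (-1) * hss
  set f : ℝ → ℝ := fun y => (∑' n : ℕ, ac n * y ^ (n+1))
      + Real.log ((1 + Real.sqrt (1 - 4*y))/2) with hfdef
  have hconst : ∀ y ∈ t, HasDerivAt f 0 y := by
    intro y hy
    have hy4 := hpos4 y hy
    have hs0 : 0 < Real.sqrt (1-4*y) := Real.sqrt_pos.mpr hy4
    have hinner : HasDerivAt (fun w : ℝ => 1 - 4*w) (-4) y := by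
      simpa using ((hasDerivAt_id' y).const_mul 4).const_sub 1
    have hsd : HasDerivAt (fun w => Real.sqrt (1 - 4*w)) (-2 / Real.sqrt (1-4*y)) y := by
      have h := (Real.hasDerivAt_sqrt hy4.ne').comp y hinner
      refine h.congr_deriv (Eq.symm ?_)
      field_simp
      ring
    have hinner2 : HasDerivAt (fun w : ℝ => (1 + Real.sqrt (1 - 4*w))/2)
        (-1 / Real.sqrt (1-4*y)) y := by
      have h := (hsd.const_add 1).div_const 2
      refine h.congr_deriv (Eq.symm ?_)
      field_simp
    have hpos : (0:ℝ) < (1 + Real.sqrt (1-4*y))/2 := by positivity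
    have hlog : HasDerivAt (fun w => Real.log ((1 + Real.sqrt (1 - 4*w))/2))
        (-(2 / (Real.sqrt (1-4*y) * (1 + Real.sqrt (1-4*y))))) y := by
      have h := (Real.hasDerivAt_log hpos.ne').comp y hinner2
      refine h.congr_deriv (Eq.symm ?_)
      have h1s : (0:ℝ) < 1 + Real.sqrt (1-4*y) := by linarith
      field_simp
    have hF := hderivF y hy
    have hsum := hF.add hlog
    refine hsum.congr_deriv (Eq.symm ?_)
    rw [hD2 y hy]
    ring
  have key : f z = f 0 := by
    apply htc.is_const_of_fderivWithin_eq_zero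
      (fun y hy => ((hconst y hy).differentiableAt).differentiableWithinAt) ?_ hzt h0t
    intro y hy
    rw [fderivWithin_of_isOpen ht hy]
    have hd := (hconst y hy).hasFDerivAt
    rw [hd.fderiv]
    ext
    simp
  have hF0 : (∑' n : ℕ, ac n * (0:ℝ) ^ (n+1)) = 0 := by
    simp only [zero_pow (Nat.succ_ne_zero _), mul_zero, tsum_zero]
  have hf0 : f 0 = 0 := by
    rw [hfdef]
    simp only [hF0]
    norm_num
  have hfz : f z = 0 := key.trans hf0
  rw [hfdef] at hfz
  simp only at hfz
  linarith [hfz]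

theorem stmt3 : ∀ z : ℝ, |z| < 1/4 →
    HasSum (fun d : ℕ => (((2*d+1)! : ℝ) / (((d+1)! : ℝ))^2) * z^(d+1))
      (-Real.log ((1 + Real.sqrt (1 - 4*z)) / 2)) := by
  intro z hz
  have hfun : (fun d : ℕ => (((2*d+1)! : ℝ) / (((d+1)! : ℝ))^2) * z^(d+1))
      = fun d : ℕ => ac d * z^(d+1) := by
    funext d
    rw [← ac_eq d]
  rw [hfun]
  exact stmt3' z hz
end

section
/- Let λ ∈ ℂ with λ ≠ 0. For each d ∈ ℕ set c d = (1/(3d+2)!) · iteratedDeriv (3d+2) (fun u : ℂ => u^3 * (-3*u)^((3*(d:ℤ)-1)) ) λ, which is the residue at u = λ of u^3(-3u)^{3d-1}/(u-λ)^{3(d+1)}. Then for every z ∈ ℂ with |z| < 1/27, HasSum (fun d : ℕ => z^d * c d) (-1/(3*(1+27*z))). -/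
open scoped Nat

lemma iteratedDeriv_cmul {n : ℕ} {f : ℂ → ℂ} (h : ContDiff ℂ n f) (a : ℂ) (x : ℂ) :
    iteratedDeriv n (fun z => a * f z) x = a * iteratedDeriv n f x := by
  simp only [iteratedDeriv_eq_iteratedFDeriv]
  have := iteratedFDeriv_const_smul_apply (i := n) (f := f) (x := x) (a := a) h.contDiffAt
  rw [show (fun z => a * f z) = a • f from rfl, this]
  simp

lemma iteratedDeriv_pow_self (n : ℕ) :
    iteratedDeriv n (fun x : ℂ => x ^ n) = fun _ => (n ! : ℂ) := by
  induction n with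
  | zero => simp [iteratedDeriv_zero]
  | succ n ih =>
    rw [iteratedDeriv_succ']
    have hd : deriv (fun x : ℂ => x ^ (n+1)) = fun x : ℂ => ((n:ℂ)+1) * x ^ n := by
      funext x
      rw [deriv_pow_field, Nat.add_sub_cancel]
      push_cast
      ring
    rw [hd]
    funext x
    rw [iteratedDeriv_cmul (by fun_prop) _ x, ih]
    push_cast [Nat.factorial_succ]
    ring

theorem stmt5 (Λ : ℂ) (hΛ : Λ ≠ 0) (c : ℕ → ℂ)
    (hc : ∀ d : ℕ, c d = (1 / ((3*d+2)! : ℂ)) *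
      iteratedDeriv (3*d+2) (fun u : ℂ => u^3 * (-3*u)^(3*(d:ℤ)-1)) Λ) :
    ∀ z : ℂ, ‖z‖ < 1/27 →
      HasSum (fun d : ℕ => z^d * c d) (-1/(3*(1+27*z))) := by
  have hcval : ∀ d : ℕ, c d = (-27)^d * (-1/3) := by
    intro d
    rw [hc d]
    have hEq : (fun u : ℂ => u^3 * (-3*u)^(3*(d:ℤ)-1)) =ᶠ[nhds Λ]
        (fun u : ℂ => ((-3:ℂ)^(3*(d:ℤ)-1)) * u^(3*d+2)) := by
      filter_upwards [eventually_ne_nhds hΛ] with u hu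
      rw [mul_zpow, mul_comm (u^3), mul_assoc]
      congr 1
      rw [← zpow_natCast u 3, ← zpow_add₀ hu, ← zpow_natCast u (3*d+2)]
      congr 1
      push_cast
      ring
    rw [Filter.EventuallyEq.iteratedDeriv_eq _ hEq,
      iteratedDeriv_cmul (by fun_prop) _ Λ, iteratedDeriv_pow_self]
    have hfac : ((3*d+2)! : ℂ) ≠ 0 := by
      exact_mod_cast Nat.factorial_ne_zero _
    field_simp
    rw [show (3*(d:ℤ)-1) = -1 + 3*d by ring,
      zpow_add₀ (by norm_num : (-3:ℂ) ≠ 0), zpow_neg_one,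
      show ((3:ℤ)*d) = ((3*d : ℕ) : ℤ) by push_cast; ring, zpow_natCast, pow_mul]
    norm_num
    ring
  intro z hz
  have hgeo : HasSum (fun d : ℕ => ((-27)*z)^d) (1/(1+27*z)) := by
    have h : ‖(-27)*z‖ < 1 := by
      rw [norm_mul]
      have : ‖(-27:ℂ)‖ = 27 := by
        norm_num
      rw [this]
      nlinarith [norm_nonneg z]
    have := hasSum_geometric_of_norm_lt_one h
    rw [show (1:ℂ) - (-27*z) = 1 + 27*z by ring] at this
    rw [one_div]
    exact this
  have := hgeo.mul_right (-1/3)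
  have hne : (1 + 27*z : ℂ) ≠ 0 := by
    intro h0
    have : ‖(27:ℂ)*z‖ = 1 := by
      have : (27:ℂ)*z = -1 := by linear_combination h0
      rw [this]; simp
    rw [norm_mul] at this
    have h27 : ‖(27:ℂ)‖ = 27 := by
      norm_num
    rw [h27] at this
    nlinarith
  have h2 : (fun d : ℕ => z^d * c d) = fun d : ℕ => ((-27)*z)^d * (-1/3) := by
    funext d; rw [hcval d, mul_pow]; ring
  have h3 : -1/(3*(1+27*z)) = 1/(1+27*z) * (-1/3) := by
    field_simp
  rw [h2, h3]
  exact this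
end

section
/- Let λ ∈ ℂ with λ ≠ 0. For d1, d2 ∈ ℕ define c d1 d2 = (1/((2d1+1)!·(2d2+1)!)) · iteratedDeriv (2d2+1) (fun u2 : ℂ => iteratedDeriv (2d1+1) (fun u1 : ℂ => u1^2 * u2 * (-2*u1 - 2*u2)^((2*(d1:ℤ)+2*(d2:ℤ)-1)) ) λ) λ, the iterated residue at (u1,u2)=(λ,λ) of u1^2u2(-2u1-2u2)^{2d1+2d2-1}/((u1-λ)^{2(d1+1)}(u2-λ)^{2(d2+1)}). Then for all z1, z2 ∈ ℂ with |z1| < 1/100 and |z2| < 1/100, HasSum (fun p : ℕ × ℕ => z1^p.1 * z2^p.2 * c p.1 p.2) ((16*z1^2 - (1-4*z2)^2) / (4*((1-8*(z1+z2)+16*(z1-z2)^2)))). -/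
open scoped Nat
open Finset



lemma iterDerivSum {ι : Type*} (s : Finset ι) (A : ι → ℂ) (g : ι → ℕ) (r : ℂ) (n : ℕ) :
    iteratedDeriv n (fun x => ∑ i ∈ s, A i * (x - r)^(g i)) =
      fun x => ∑ i ∈ s, A i * ((g i).descFactorial n : ℂ) * (x - r)^(g i - n) := by
  induction n with
  | zero => funext x; simp
  | succ n ih =>
    rw [iteratedDeriv_succ, ih]
    funext x
    have h : HasDerivAt (fun x : ℂ => ∑ i ∈ s, A i * ((g i).descFactorial n : ℂ) * (x - r)^(g i - n))
        (∑ i ∈ s, A i * ((g i).descFactorial n : ℂ) * (((g i - n : ℕ) : ℂ) * (x - r)^(g i - n - 1) * 1)) x :=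
      HasDerivAt.fun_sum fun i _ => (((hasDerivAt_id x).sub_const r).pow _).const_mul _
    rw [h.deriv]
    refine Finset.sum_congr rfl fun i _ => ?_
    rw [Nat.descFactorial_succ, Nat.sub_sub]
    push_cast
    ring

lemma descFacZero (m n : ℕ) : ((m.descFactorial n : ℂ)) * (0:ℂ)^(m-n) = if m = n then (n ! : ℂ) else 0 := by
  rcases lt_trichotomy m n with h | rfl | h
  · simp [Nat.descFactorial_eq_zero_iff_lt.2 h, if_neg h.ne]
  · simp [Nat.descFactorial_self]
  · rw [zero_pow (by omega), if_neg h.ne', mul_zero]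

lemma iterDerivSumEval {ι : Type*} (s : Finset ι) (A : ι → ℂ) (g : ι → ℕ) (r : ℂ) (n : ℕ) :
    iteratedDeriv n (fun x => ∑ i ∈ s, A i * (x - r)^(g i)) r =
      ∑ i ∈ s, A i * (if g i = n then (n ! : ℂ) else 0) := by
  rw [iterDerivSum]
  refine Finset.sum_congr rfl fun i _ => ?_
  rw [mul_assoc, sub_self, descFacZero]

lemma expand1 (Λ u2 : ℂ) (n : ℕ) :
    (fun u1 : ℂ => u1^2 * u2 * (-2*u1 - 2*u2)^n) =
      fun u1 => ∑ p ∈ (range 3 ×ˢ range (n+1)),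
        ((Nat.choose 2 p.1 : ℂ) * Λ^(2-p.1) * u2 * (Nat.choose n p.2 : ℂ) * (-2)^p.2
          * (-2*Λ - 2*u2)^(n - p.2)) * (u1 - Λ)^(p.1 + p.2) := by
  funext u1
  rw [Finset.sum_product]
  rw [show (-2*u1 - 2*u2 : ℂ) = (-2)*(u1-Λ) + (-2*Λ - 2*u2) by ring, add_pow,
    show (u1:ℂ)^2 = ((u1-Λ) + Λ)^2 by ring, add_pow]
  rw [Finset.sum_mul, Finset.sum_mul_sum]
  refine Finset.sum_congr rfl fun j hj => Finset.sum_congr rfl fun q hq => ?_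
  rw [mul_pow, pow_add]
  push_cast
  ring

lemma expand2 (Λ : ℂ) (n m : ℕ) (hm : m ≤ n) :
    (fun u2 : ℂ => u2 * (-2*Λ - 2*u2)^m) =
      fun u2 => ∑ p ∈ (range 2 ×ˢ range (n+1)),
        ((Nat.choose 1 p.1 : ℂ) * Λ^(1-p.1) * (Nat.choose m p.2 : ℂ) * (-2)^p.2
          * (-4*Λ)^(m - p.2)) * (u2 - Λ)^(p.1 + p.2) := by
  funext u2
  have key : ∀ y : ℂ, (y + Λ) * ((-2)*y + (-4*Λ))^m =
      ∑ p ∈ (range 2 ×ˢ range (n+1)),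
        ((Nat.choose 1 p.1 : ℂ) * Λ^(1-p.1) * (Nat.choose m p.2 : ℂ) * (-2)^p.2
          * (-4*Λ)^(m - p.2)) * y^(p.1 + p.2) := by
    intro y
    rw [Finset.sum_product]
    have h2 : ∀ j ∈ range 2, ∑ q ∈ range (n+1),
        ((Nat.choose 1 j : ℂ) * Λ^(1-j) * (Nat.choose m q : ℂ) * (-2)^q * (-4*Λ)^(m - q)) * y^(j + q)
        = ∑ q ∈ range (m+1),
        ((Nat.choose 1 j : ℂ) * Λ^(1-j) * (Nat.choose m q : ℂ) * (-2)^q * (-4*Λ)^(m - q)) * y^(j + q) := by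
      intro j _
      refine (Finset.sum_subset (by simp [Finset.range_subset]; omega) fun q _ hq => ?_).symm
      simp only [Finset.mem_range, not_lt] at hq
      have : m < q := by omega
      simp [Nat.choose_eq_zero_of_lt this]
    rw [Finset.sum_congr rfl h2, add_pow,
      show (y + Λ : ℂ) = ∑ j ∈ range 2, y^j * Λ^(1-j) * (Nat.choose 1 j : ℂ) by
        simp [Finset.sum_range_succ]; ring, Finset.sum_mul_sum]
    refine Finset.sum_congr rfl fun j hj => Finset.sum_congr rfl fun q hq => ?_
    rw [mul_pow, pow_add]
    push_cast
    ring
  calc u2 * (-2*Λ - 2*u2)^m = ((u2 - Λ) + Λ) * ((-2)*(u2-Λ) + (-4*Λ))^m := by ring_nf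
  _ = _ := key (u2 - Λ)

noncomputable def BIG (Λ : ℂ) (n a b : ℕ) (P : (ℕ × ℕ) × (ℕ × ℕ)) : ℂ :=
  ((Nat.choose 2 P.1.1 : ℂ) * Λ^(2-P.1.1) * (Nat.choose n P.1.2 : ℂ) * (-2)^P.1.2 *
      (if P.1.1 + P.1.2 = a then (a ! : ℂ) else 0) *
    ((Nat.choose 1 P.2.1 : ℂ) * Λ^(1-P.2.1) * (Nat.choose (n - P.1.2) P.2.2 : ℂ) * (-2)^P.2.2 *
      (-4*Λ)^(n - P.1.2 - P.2.2))) *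
    (if P.2.1 + P.2.2 = b then (b ! : ℂ) else 0)

lemma bigstep (Λ : ℂ) (n a b : ℕ) :
    iteratedDeriv b (fun u2 => iteratedDeriv a (fun u1 : ℂ => u1^2 * u2 * (-2*u1 - 2*u2)^n) Λ) Λ =
    ∑ P ∈ (range 3 ×ˢ range (n+1)) ×ˢ (range 2 ×ˢ range (n+1)), BIG Λ n a b P := by
  have h1 : (fun u2 : ℂ => iteratedDeriv a (fun u1 : ℂ => u1^2 * u2 * (-2*u1 - 2*u2)^n) Λ)
      = fun u2 => ∑ P ∈ (range 3 ×ˢ range (n+1)) ×ˢ (range 2 ×ˢ range (n+1)),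
        ((Nat.choose 2 P.1.1 : ℂ) * Λ^(2-P.1.1) * (Nat.choose n P.1.2 : ℂ) * (-2)^P.1.2 *
          (if P.1.1 + P.1.2 = a then (a ! : ℂ) else 0) *
         ((Nat.choose 1 P.2.1 : ℂ) * Λ^(1-P.2.1) * (Nat.choose (n - P.1.2) P.2.2 : ℂ) * (-2)^P.2.2
          * (-4*Λ)^(n - P.1.2 - P.2.2))) * (u2 - Λ)^(P.2.1 + P.2.2) := by
    funext u2
    rw [expand1 Λ u2 n, iterDerivSumEval]
    calc ∑ p ∈ (range 3 ×ˢ range (n+1)),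
          ((Nat.choose 2 p.1 : ℂ) * Λ^(2-p.1) * u2 * (Nat.choose n p.2 : ℂ) * (-2)^p.2
            * (-2*Λ - 2*u2)^(n - p.2)) * (if p.1 + p.2 = a then (a ! : ℂ) else 0)
        = ∑ p ∈ (range 3 ×ˢ range (n+1)),
          ((Nat.choose 2 p.1 : ℂ) * Λ^(2-p.1) * (Nat.choose n p.2 : ℂ) * (-2)^p.2
            * (if p.1 + p.2 = a then (a ! : ℂ) else 0)) * (u2 * (-2*Λ - 2*u2)^(n - p.2)) := by
          refine Finset.sum_congr rfl fun p _ => ?_; ring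
      _ = ∑ p ∈ (range 3 ×ˢ range (n+1)),
          ((Nat.choose 2 p.1 : ℂ) * Λ^(2-p.1) * (Nat.choose n p.2 : ℂ) * (-2)^p.2
            * (if p.1 + p.2 = a then (a ! : ℂ) else 0)) *
            (∑ q ∈ (range 2 ×ˢ range (n+1)),
              ((Nat.choose 1 q.1 : ℂ) * Λ^(1-q.1) * (Nat.choose (n - p.2) q.2 : ℂ) * (-2)^q.2
                * (-4*Λ)^(n - p.2 - q.2)) * (u2 - Λ)^(q.1 + q.2)) := by
          refine Finset.sum_congr rfl fun p _ => ?_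
          rw [congrFun (expand2 Λ n (n - p.2) (Nat.sub_le _ _)) u2]
      _ = _ := by
          rw [Finset.sum_product (s := range 3 ×ˢ range (n+1))]
          refine Finset.sum_congr rfl fun p _ => ?_
          rw [Finset.mul_sum]
          refine Finset.sum_congr rfl fun q _ => ?_
          ring
  rw [h1, iterDerivSumEval]
  rfl

lemma cval_pos (Λ : ℂ) (e d2 : ℕ) :
    ∑ P ∈ (range 3 ×ˢ range (2*e+2*d2+1+1)) ×ˢ (range 2 ×ˢ range (2*e+2*d2+1+1)),
      BIG Λ (2*e+2*d2+1) (2*e+3) (2*d2+1) P =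
    ((2*e+3)! : ℂ) * ((2*d2+1)! : ℂ) * ((-2)^(2*e+2*d2+1) * (Nat.choose (2*e+2*d2+1) (2*e+1) : ℂ)) := by
  rw [Finset.sum_eq_single_of_mem (((2, 2*e+1), (1, 2*d2)) : (ℕ×ℕ)×(ℕ×ℕ))]
  · unfold BIG
    simp only []
    rw [if_pos (by ring), if_pos (by ring)]
    have h1 : 2*e+2*d2+1 - (2*e+1) = 2*d2 := by omega
    rw [h1]
    simp [Nat.choose_self]
    rw [show 2*e+2*d2+1 = (2*e+1) + 2*d2 by ring,
      show ((-2:ℂ))^(2*e+1+2*d2) = (-2)^(2*e+1) * 2^(2*d2) by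
        rw [pow_add, (even_two_mul d2).neg_pow]]
    ring
  · simp only [Finset.mem_product, Finset.mem_range]
    omega
  · rintro ⟨⟨j, q⟩, ⟨i, r⟩⟩ hP hne
    simp only [Finset.mem_product, Finset.mem_range] at hP
    unfold BIG
    simp only []
    by_cases h1 : j + q = 2*e+3
    swap
    · rw [if_neg h1]; ring
    by_cases h2 : i + r = 2*d2+1
    swap
    · rw [if_neg h2]; ring
    have hne' : ¬(j = 2 ∧ q = 2*e+1 ∧ i = 1 ∧ r = 2*d2) := by
      intro ⟨hj, hq, hi, hr⟩; exact hne (by rw [hj, hq, hi, hr])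
    have hlt : 2*e+2*d2+1 - q < r := by omega
    rw [Nat.choose_eq_zero_of_lt hlt]
    push_cast
    ring

lemma cval_zero (Λ : ℂ) (f : ℕ) :
    ∑ P ∈ (range 3 ×ˢ range (2*f+1+1)) ×ˢ (range 2 ×ˢ range (2*f+1+1)),
      BIG Λ (2*f+1) 1 (2*f+3) P = 0 := by
  refine Finset.sum_eq_zero ?_
  rintro ⟨⟨j, q⟩, ⟨i, r⟩⟩ hP
  simp only [Finset.mem_product, Finset.mem_range] at hP
  unfold BIG
  simp only []
  by_cases h1 : j + q = 1
  swap
  · rw [if_neg h1]; ring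
  by_cases h2 : i + r = 2*f+3
  swap
  · rw [if_neg h2]; ring
  have hlt : 2*f+1 - q < r := by omega
  rw [Nat.choose_eq_zero_of_lt hlt]
  push_cast
  ring

lemma c00 (Λ : ℂ) (hΛ : Λ ≠ 0) :
    iteratedDeriv 1 (fun u2 : ℂ =>
      iteratedDeriv 1 (fun u1 : ℂ => u1^2 * u2 * (-2*u1 - 2*u2)^(-1:ℤ)) Λ) Λ = -(1/4) := by
  have hΛΛ : (Λ + Λ : ℂ) ≠ 0 := by
    rw [← two_mul]; exact mul_ne_zero two_ne_zero hΛ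
  have hg : ∀ u2 : ℂ, Λ + u2 ≠ 0 →
      iteratedDeriv 1 (fun u1 : ℂ => u1^2 * u2 * (-2*u1 - 2*u2)^(-1:ℤ)) Λ
        = -(Λ*u2*(Λ+2*u2))/(2*(Λ+u2)^2) := by
    intro u2 h
    rw [iteratedDeriv_one]
    have hd : (-2*Λ - 2*u2 : ℂ) ≠ 0 := by
      intro hh; apply h; linear_combination (-1/2 : ℂ) * hh
    have Hnum : HasDerivAt (fun x : ℂ => x^2 * u2) (2*Λ^1 * u2) Λ :=
      (hasDerivAt_pow 2 Λ).mul_const u2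
    have Hden : HasDerivAt (fun x : ℂ => -2*x - 2*u2) (-2*1) Λ :=
      ((hasDerivAt_id Λ).const_mul (-2)).sub_const (2*u2)
    have H := Hnum.div Hden hd
    have hfun : (fun u1 : ℂ => u1^2 * u2 * (-2*u1 - 2*u2)^(-1:ℤ))
        = fun x : ℂ => (x^2 * u2) / (-2*x - 2*u2) := by
      funext x; rw [zpow_neg_one, div_eq_mul_inv]
    rw [hfun, show (fun x : ℂ => (x^2 * u2) / (-2*x - 2*u2)) = (fun x : ℂ => x^2 * u2) / (fun x : ℂ => -2*x - 2*u2) from rfl, H.deriv,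
      div_eq_div_iff (pow_ne_zero 2 hd) (mul_ne_zero two_ne_zero (pow_ne_zero 2 h))]
    ring
  have hne : ∀ᶠ u2 in nhds Λ, Λ + u2 ≠ 0 := by
    have hct : ContinuousAt (fun u2 : ℂ => Λ + u2) Λ := by fun_prop
    exact hct.eventually_ne hΛΛ
  have hev : (fun u2 : ℂ =>
      iteratedDeriv 1 (fun u1 : ℂ => u1^2 * u2 * (-2*u1 - 2*u2)^(-1:ℤ)) Λ)
      =ᶠ[nhds Λ] (fun u2 : ℂ => -(Λ*u2*(Λ+2*u2))/(2*(Λ+u2)^2)) :=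
    hne.mono fun u2 h => hg u2 h
  rw [iteratedDeriv_one, hev.deriv_eq]
  have Hnum : HasDerivAt (fun u2 : ℂ => -(Λ*u2*(Λ+2*u2)))
      (-((Λ*1)*(Λ+2*Λ) + (Λ*Λ)*(2*1))) Λ :=
    (((hasDerivAt_id Λ).const_mul Λ).mul (((hasDerivAt_id Λ).const_mul 2).const_add Λ)).neg
  have Hden : HasDerivAt (fun u2 : ℂ => 2*(Λ+u2)^2) (2*((2:ℕ)*(Λ+Λ)^1*1)) Λ :=
    (((hasDerivAt_id Λ).const_add Λ).pow 2).const_mul 2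
  have hd2 : (2*(Λ+Λ)^2 : ℂ) ≠ 0 := by
    apply mul_ne_zero two_ne_zero (pow_ne_zero _ hΛΛ)
  have H := Hnum.div Hden hd2
  rw [show (fun u2 : ℂ => -(Λ*u2*(Λ+2*u2))/(2*(Λ+u2)^2)) = (fun u2 : ℂ => -(Λ*u2*(Λ+2*u2))) / (fun u2 : ℂ => 2*(Λ+u2)^2) from rfl,
    H.deriv, show (-(1/4) : ℂ) = (-1)/4 by norm_num,
    div_eq_div_iff (pow_ne_zero 2 hd2) (by norm_num : (4:ℂ) ≠ 0)]
  push_cast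
  ring

lemma evenSum (k : ℕ) (t : ℂ) (ht : ‖t‖ < 1) :
    HasSum (fun d : ℕ => ((2*d + k).choose k : ℂ) * (t^2)^d)
      ((1/(1-t)^(k+1) + 1/(1+t)^(k+1))/2) := by
  have hp := hasSum_choose_mul_geometric_of_norm_lt_one (𝕜 := ℂ) k ht
  have hm := hasSum_choose_mul_geometric_of_norm_lt_one (𝕜 := ℂ) k (r := -t) (by simpa using ht)
  rw [sub_neg_eq_add] at hm
  have hadd := (hp.add hm).div_const 2
  have hinj : Function.Injective (fun d : ℕ => 2*d) := fun a b h => by simpa using h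
  have hvan : ∀ n ∉ Set.range (fun d : ℕ => 2*d),
      (((n+k).choose k : ℂ) * t^n + ((n+k).choose k : ℂ) * (-t)^n)/2 = 0 := by
    intro n hn
    have hodd : Odd n := by
      rcases Nat.even_or_odd n with he | ho
      · obtain ⟨m, hm⟩ := he
        exact absurd ⟨m, by simp; omega⟩ hn
      · exact ho
    rw [hodd.neg_pow]
    ring
  have h3 := (hinj.hasSum_iff hvan).2 hadd
  have hfe : ((fun n => (((n+k).choose k : ℂ) * t^n + ((n+k).choose k : ℂ) * (-t)^n)/2)
      ∘ (fun d : ℕ => 2*d)) = fun d : ℕ => ((2*d + k).choose k : ℂ) * (t^2)^d := by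
    funext d
    simp only [Function.comp_apply]
    rw [(even_two_mul d).neg_pow, pow_mul]
    ring
  rwa [hfe] at h3

lemma outerGeom (w1 s : ℂ) (hs : ‖w1 / s^2‖ < 1) (hsne : s ≠ 0) :
    HasSum (fun d : ℕ => w1^d * (1/s^(2*d+2))) (1/(s^2 - w1)) := by
  have hne : s^2 - w1 ≠ 0 := by
    intro h
    have : w1 = s^2 := by linear_combination -h
    rw [this, div_self (pow_ne_zero 2 hsne)] at hs
    simp at hs
  have h := (hasSum_geometric_of_norm_lt_one hs).mul_right (1/s^2)
  have hfe : (fun n : ℕ => (w1/s^2)^n * (1/s^2)) = fun d : ℕ => w1^d * (1/s^(2*d+2)) := by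
    funext d
    rw [div_pow, show (2*d+2) = 2*d + 2 from rfl, pow_add, pow_mul]
    field_simp
  rw [hfe] at h
  convert h using 1
  case e'_3 => rfl
  have hs2 : (s:ℂ)^2 ≠ 0 := pow_ne_zero 2 hsne
  have h1mw : (1 - w1/s^2) ≠ 0 := by
    intro hh
    apply hne
    have := mul_eq_zero_of_left hh (s^2)
    rw [sub_mul, one_mul, div_mul_cancel₀ _ hs2] at this
    linear_combination this
  field_simp


lemma choose_le_two_pow' (m k : ℕ) : m.choose k ≤ 2^m := by
  rcases le_or_gt k m with h | h
  · calc m.choose k ≤ ∑ j ∈ Finset.range (m+1), m.choose j :=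
        Finset.single_le_sum (fun i _ => Nat.zero_le _) (by simp [Nat.lt_succ, h])
    _ = 2^m := Nat.sum_range_choose m
  · rw [Nat.choose_eq_zero_of_lt h]; exact Nat.zero_le _

lemma coreHasSum (w1 t : ℂ) (h1 : ‖w1‖ < 1/25) (ht : ‖t‖ < 1/5) :
    HasSum (fun p : ℕ × ℕ => ((2*p.1+2*p.2+1).choose (2*p.1+1) : ℂ) * w1^p.1 * (t^2)^p.2)
      ((1/((1-t)^2 - w1) + 1/((1+t)^2 - w1))/2) := by
  have ht1 : ‖t‖ < 1 := by linarith
  have hm : (4/5 : ℝ) < ‖1 - t‖ := by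
    have := norm_sub_norm_le (1:ℂ) t
    rw [norm_one] at this
    linarith
  have hp : (4/5 : ℝ) < ‖1 + t‖ := by
    have := norm_sub_norm_le (1:ℂ) (-t)
    rw [norm_one, norm_neg, sub_neg_eq_add] at this
    linarith
  have hmne : (1 - t : ℂ) ≠ 0 := by intro h; rw [h, norm_zero] at hm; linarith
  have hpne : (1 + t : ℂ) ≠ 0 := by intro h; rw [h, norm_zero] at hp; linarith
  have hgm : ‖w1 / (1-t)^2‖ < 1 := by
    rw [norm_div, norm_pow]
    rw [div_lt_one (by positivity)]
    nlinarith [norm_nonneg w1]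
  have hgp : ‖w1 / (1+t)^2‖ < 1 := by
    rw [norm_div, norm_pow]
    rw [div_lt_one (by positivity)]
    nlinarith [norm_nonneg w1]
  set I : ℕ → ℂ := fun d1 => (1/(1-t)^(2*d1+2) + 1/(1+t)^(2*d1+2))/2 with hI
  set f : ℕ × ℕ → ℂ := fun p => ((2*p.1+2*p.2+1).choose (2*p.1+1) : ℂ) * w1^p.1 * (t^2)^p.2 with hf
  have hinner : ∀ d1 : ℕ, HasSum (fun d2 => f (d1, d2)) (w1^d1 * I d1) := by
    intro d1
    have h := (evenSum (2*d1+1) t ht1).mul_left (w1^d1)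
    have hfe : (fun d2 : ℕ => w1^d1 * (((2*d2 + (2*d1+1)).choose (2*d1+1) : ℂ) * (t^2)^d2))
        = fun d2 => f (d1, d2) := by
      funext d2
      rw [hf]
      simp only []
      rw [show 2*d2 + (2*d1+1) = 2*d1+2*d2+1 by ring]
      ring
    rw [hfe] at h
    convert h using 2 <;> rw [hI] <;> simp only [] <;> norm_num
  have houter : HasSum (fun d1 => w1^d1 * I d1)
      ((1/((1-t)^2 - w1) + 1/((1+t)^2 - w1))/2) := by
    have h := ((outerGeom w1 (1-t) hgm hmne).add (outerGeom w1 (1+t) hgp hpne)).div_const 2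
    have hfe : (fun d1 : ℕ => (w1^d1 * (1/(1-t)^(2*d1+2)) + w1^d1 * (1/(1+t)^(2*d1+2)))/2)
        = fun d1 => w1^d1 * I d1 := by
      funext d1; rw [hI]; ring
    rwa [hfe] at h
  have hbound : ∀ p : ℕ × ℕ, ‖f p‖ ≤ 2*(4/25)^p.1 * ((4/25)^p.2 : ℝ) := by
    rintro ⟨d1, d2⟩
    have ht2 : ‖t‖^2 ≤ 1/25 := by nlinarith [norm_nonneg t]
    calc ‖f (d1,d2)‖ = ((2*d1+2*d2+1).choose (2*d1+1) : ℝ) * ‖w1‖^d1 * (‖t‖^2)^d2 := by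
          rw [hf]; simp [norm_mul, norm_pow]
      _ ≤ (2:ℝ)^(2*d1+2*d2+1) * (1/25)^d1 * (1/25)^d2 := by
          gcongr
          exact_mod_cast choose_le_two_pow' _ _
      _ = 2*(4/25)^d1 * ((4/25)^d2) := by
          rw [pow_add, pow_add, pow_mul, pow_mul, pow_one,
            show ((2:ℝ)^2) = 4 by norm_num,
            show ((4:ℝ)/25) = 4 * (1/25) by norm_num, mul_pow, mul_pow]
          ring
  have hgsum : Summable (fun p : ℕ × ℕ => 2*(4/25)^p.1 * ((4/25)^p.2 : ℝ)) := by
    have hg : Summable (fun n : ℕ => ((4/25)^n : ℝ)) :=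
      summable_geometric_of_lt_one (by norm_num) (by norm_num)
    exact (hg.mul_left 2).mul_of_nonneg hg (fun n => by positivity) (fun n => by positivity)
  have hsum : Summable f := Summable.of_norm_bounded hgsum hbound
  have htsum : ∑' p, f p = (1/((1-t)^2 - w1) + 1/((1+t)^2 - w1))/2 := by
    rw [Summable.tsum_prod' hsum (fun d1 => (hinner d1).summable),
      tsum_congr (fun d1 => (hinner d1).tsum_eq)]
    exact houter.tsum_eq
  exact htsum ▸ hsum.hasSum


theorem stmt10 (Λ : ℂ) (hΛ : Λ ≠ 0) (c : ℕ → ℕ → ℂ)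
    (hc : ∀ d1 d2 : ℕ, c d1 d2 =
      (1 / (((2*d1+1)! : ℂ) * ((2*d2+1)! : ℂ))) *
      iteratedDeriv (2*d2+1) (fun u2 : ℂ =>
        iteratedDeriv (2*d1+1) (fun u1 : ℂ =>
          u1^2 * u2 * ((-2*u1 - 2*u2)^(2*(d1:ℤ)+2*(d2:ℤ)-1))) Λ) Λ) :
    ∀ z1 z2 : ℂ, ‖z1‖ < 1/100 → ‖z2‖ < 1/100 →
      HasSum (fun p : ℕ × ℕ => z1^p.1 * z2^p.2 * c p.1 p.2)
        ((16*z1^2 - (1-4*z2)^2) / (4*(1 - 8*(z1+z2) + 16*(z1-z2)^2))) := by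
  -- closed forms for c
  have hcpos : ∀ e d2 : ℕ, c (e+1) d2
      = (-2)^(2*e+2*d2+1) * (((2*e+2*d2+1).choose (2*e+1) : ℂ)) := by
    intro e d2
    rw [hc (e+1) d2, show 2*(e+1)+1 = 2*e+3 by ring]
    have hfun : (fun u2 : ℂ => iteratedDeriv (2*e+3) (fun u1 : ℂ =>
          u1^2 * u2 * ((-2*u1 - 2*u2)^(2*((e+1 : ℕ) : ℤ)+2*(d2 : ℤ)-1))) Λ)
        = fun u2 : ℂ => iteratedDeriv (2*e+3) (fun u1 : ℂ =>
          u1^2 * u2 * (-2*u1 - 2*u2)^(2*e+2*d2+1)) Λ := by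
      funext u2
      congr 1
      funext u1
      rw [show (2*((e+1 : ℕ) : ℤ)+2*(d2 : ℤ)-1) = ((2*e+2*d2+1 : ℕ) : ℤ) by push_cast; ring,
        zpow_natCast]
    rw [hfun, bigstep Λ (2*e+2*d2+1) (2*e+3) (2*d2+1), cval_pos]
    have hf1 : ((2*e+3)! : ℂ) ≠ 0 := Nat.cast_ne_zero.2 (Nat.factorial_ne_zero _)
    have hf2 : ((2*d2+1)! : ℂ) ≠ 0 := Nat.cast_ne_zero.2 (Nat.factorial_ne_zero _)
    field_simp
  have hczero : ∀ f : ℕ, c 0 (f+1) = 0 := by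
    intro f
    rw [hc 0 (f+1), show 2*(f+1)+1 = 2*f+3 by ring, show 2*0+1 = 1 by norm_num]
    have hfun : (fun u2 : ℂ => iteratedDeriv 1 (fun u1 : ℂ =>
          u1^2 * u2 * ((-2*u1 - 2*u2)^(2*((0 : ℕ) : ℤ)+2*((f+1 : ℕ) : ℤ)-1))) Λ)
        = fun u2 : ℂ => iteratedDeriv 1 (fun u1 : ℂ =>
          u1^2 * u2 * (-2*u1 - 2*u2)^(2*f+1)) Λ := by
      funext u2
      congr 1
      funext u1
      rw [show (2*((0 : ℕ) : ℤ)+2*((f+1 : ℕ) : ℤ)-1) = ((2*f+1 : ℕ) : ℤ) by push_cast; ring,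
        zpow_natCast]
    rw [hfun, bigstep Λ (2*f+1) 1 (2*f+3), cval_zero, mul_zero]
  have hc00 : c 0 0 = -(1/4) := by
    rw [hc 0 0, show 2*0+1 = 1 by norm_num]
    have hfun : (fun u2 : ℂ => iteratedDeriv 1 (fun u1 : ℂ =>
          u1^2 * u2 * ((-2*u1 - 2*u2)^(2*((0 : ℕ) : ℤ)+2*((0 : ℕ) : ℤ)-1))) Λ)
        = fun u2 : ℂ => iteratedDeriv 1 (fun u1 : ℂ =>
          u1^2 * u2 * (-2*u1 - 2*u2)^(-1 : ℤ)) Λ := by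
      funext u2
      congr 1
    rw [hfun, c00 Λ hΛ]
    norm_num [Nat.factorial]
  -- main summation
  intro z1 z2 hz1 hz2
  obtain ⟨t, ht2⟩ := IsAlgClosed.exists_pow_nat_eq (4*z2) (zero_lt_two (α := ℕ))
  have hw1 : ‖(4*z1 : ℂ)‖ < 1/25 := by
    rw [norm_mul]
    have : ‖(4:ℂ)‖ = 4 := by norm_num
    rw [this]; linarith
  have htn : ‖t‖ < 1/5 := by
    have h2 : ‖t‖^2 = ‖(4*z2 : ℂ)‖ := by rw [← norm_pow, ht2]
    have h4 : ‖(4*z2 : ℂ)‖ < 1/25 := by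
      rw [norm_mul]
      have : ‖(4:ℂ)‖ = 4 := by norm_num
      rw [this]; linarith
    nlinarith [norm_nonneg t]
  have hcore := (coreHasSum (4*z1) t hw1 htn).mul_left (-2*z1)
  set T : ℂ := (1/((1-t)^2 - 4*z1) + 1/((1+t)^2 - 4*z1))/2 with hT
  set F : ℕ × ℕ → ℂ := fun p => z1^p.1 * z2^p.2 * c p.1 p.2 with hF
  set G : ℕ × ℕ → ℂ := fun p => if p = ((0,0) : ℕ × ℕ) then (-(1/4) : ℂ) else 0 with hG
  have hGsum : HasSum G (-(1/4)) := hasSum_ite_eq ((0,0) : ℕ × ℕ) (-(1/4))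
  have hpow4 : ∀ e d2 : ℕ, ((-2:ℂ))^(2*e+2*d2+1) = (-2) * 4^e * 4^d2 := by
    intro e d2
    calc ((-2:ℂ))^(2*e+2*d2+1) = (-2)^(2*e) * (-2)^(2*d2) * (-2)^1 := by
          rw [← pow_add, ← pow_add]
      _ = (-2) * 4^e * 4^d2 := by rw [pow_mul, pow_mul]; norm_num; ring
  have hHsum : HasSum (fun p : ℕ × ℕ => F p - G p) ((-2*z1) * T) := by
    have hiinj : Function.Injective (fun q : ℕ × ℕ => ((q.1+1, q.2) : ℕ × ℕ)) := by
      rintro ⟨a, b⟩ ⟨a', b'⟩ h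
      simp only [Prod.mk.injEq] at h
      exact Prod.ext (by omega) h.2
    have hvan : ∀ p ∉ Set.range (fun q : ℕ × ℕ => ((q.1+1, q.2) : ℕ × ℕ)),
        F p - G p = 0 := by
      rintro ⟨d1, d2⟩ hp
      have hd1 : d1 = 0 := by
        by_contra h
        exact hp ⟨(d1-1, d2), by simp; omega⟩
      subst hd1
      rcases d2 with _ | f
      · simp [hF, hG, hc00]
      · simp [hF, hG, hczero f]
    refine (hiinj.hasSum_iff hvan).1 ?_
    have hfe : ((fun p : ℕ × ℕ => F p - G p) ∘ (fun q : ℕ × ℕ => ((q.1+1, q.2) : ℕ × ℕ)))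
        = fun q : ℕ × ℕ => (-2*z1) * (((2*q.1+2*q.2+1).choose (2*q.1+1) : ℂ)
            * (4*z1)^q.1 * (t^2)^q.2) := by
      funext q
      simp only [Function.comp_apply, hF, hG]
      rw [if_neg (by simp), hcpos q.1 q.2, hpow4 q.1 q.2, ht2, mul_pow, mul_pow]
      ring
    rw [hfe]
    exact hcore
  have hFsum : HasSum F (-(1/4) + (-2*z1) * T) := by
    have h := hGsum.add hHsum
    have hfe : (fun p => G p + (F p - G p)) = F := by funext p; ring
    rwa [hfe] at h
  -- identify the value
  have hval : -(1/4) + (-2*z1) * T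
      = (16*z1^2 - (1-4*z2)^2) / (4*(1 - 8*(z1+z2) + 16*(z1-z2)^2)) := by
    have ht1 : ‖t‖ < 1 := by linarith
    have hm : (4/5 : ℝ) < ‖1 - t‖ := by
      have := norm_sub_norm_le (1:ℂ) t
      rw [norm_one] at this
      linarith
    have hp : (4/5 : ℝ) < ‖1 + t‖ := by
      have := norm_sub_norm_le (1:ℂ) (-t)
      rw [norm_one, norm_neg, sub_neg_eq_add] at this
      linarith
    have hdm : ((1-t)^2 - 4*z1 : ℂ) ≠ 0 := by
      intro h
      have h2 : ‖((1-t) : ℂ)^2‖ = ‖(4*z1 : ℂ)‖ := by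
        rw [sub_eq_zero] at h
        rw [h]
      rw [norm_pow] at h2
      nlinarith
    have hdp : ((1+t)^2 - 4*z1 : ℂ) ≠ 0 := by
      intro h
      have h2 : ‖((1+t) : ℂ)^2‖ = ‖(4*z1 : ℂ)‖ := by
        rw [sub_eq_zero] at h
        rw [h]
      rw [norm_pow] at h2
      nlinarith
    have hz2t : z2 = t^2/4 := by linear_combination -(1/4 : ℂ) * ht2
    have hprod : (4*(1 - 8*(z1+z2) + 16*(z1-z2)^2) : ℂ)
        = 4*(((1-t)^2 - 4*z1) * ((1+t)^2 - 4*z1)) := by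
      rw [hz2t]; ring
    rw [hT, hprod, eq_div_iff (by exact mul_ne_zero (by norm_num : (4:ℂ) ≠ 0) (mul_ne_zero hdm hdp))]
    field_simp
    rw [hz2t]
    ring
  rw [← hval]
  exact hFsum
end

section
/- Let λ ∈ ℂ with λ ≠ 0. For d1, d2 ∈ ℕ define c d1 d2 = (1/((2d1+1)!·(2d2+1)!)) · iteratedDeriv (2d2+1) (fun u2 : ℂ => iteratedDeriv (2d1+1) (fun u1 : ℂ => u1 * u2^2 * (-2*u1 - 2*u2)^((2*(d1:ℤ)+2*(d2:ℤ)-1)) ) λ) λ, the iterated residue at (u1,u2)=(λ,λ) of u1u2^2(-2u1-2u2)^{2d1+2d2-1}/((u1-λ)^{2(d1+1)}(u2-λ)^{2(d2+1)}). Then for all z1, z2 ∈ ℂ with |z1| < 1/100 and |z2| < 1/100, HasSum (fun p : ℕ × ℕ => z1^p.1 * z2^p.2 * c p.1 p.2) ((16*z2^2 - (1-4*z1)^2) / (4*((1-8*(z1+z2)+16*(z1-z2)^2)))). -/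
open scoped Nat
open scoped Topology

lemma pderiv (a b : ℂ) : ∀ (n k : ℕ) (C t : ℂ),
    iteratedDeriv n (fun x : ℂ => C * (a*x+b)^k) t
      = C * a^n * (k.descFactorial n) * (a*t+b)^(k-n) := by
  intro n
  induction n with
  | zero => intro k C t; simp
  | succ n ih =>
    intro k C t
    rw [iteratedDeriv_succ']
    match k with
    | 0 =>
      have h0 : (deriv fun x : ℂ => C * (a*x+b)^0) = (fun x : ℂ => (0:ℂ) * (a*x+b)^0) := by
        funext x; simp
      rw [h0, ih]; simp
    | k+1 =>
      have h0 : (deriv fun x : ℂ => C * (a*x+b)^(k+1))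
          = (fun x : ℂ => (C*((k+1)*a)) * (a*x+b)^k) := by
        funext x
        have h1 : HasDerivAt (fun x : ℂ => a*x+b) a x := by
          simpa using ((hasDerivAt_id x).const_mul a).add_const b
        have h2 := (h1.pow (k+1)).const_mul C
        rw [(show HasDerivAt (fun x : ℂ => C * (a*x+b)^(k+1)) _ x from h2).deriv]; push_cast; ring
      rw [h0, ih, Nat.succ_descFactorial_succ]
      push_cast; ring_nf

lemma itadd {n : ℕ} {f g : ℂ → ℂ} (hf : ContDiff ℂ n f) (hg : ContDiff ℂ n g) (t : ℂ) :
    iteratedDeriv n (fun x => f x + g x) t = iteratedDeriv n f t + iteratedDeriv n g t := by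
  simp only [← iteratedDerivWithin_univ]
  exact iteratedDerivWithin_add (Set.mem_univ t) uniqueDiffOn_univ hf.contDiffWithinAt hg.contDiffWithinAt

lemma cval (Λ : ℂ) (hΛ : Λ ≠ 0) (d1 d2 : ℕ) :
    (1 / (((2*d1+1)! : ℂ) * ((2*d2+1)! : ℂ))) *
      iteratedDeriv (2*d2+1) (fun u2 : ℂ =>
        iteratedDeriv (2*d1+1) (fun u1 : ℂ =>
          u1 * u2^2 * ((-2*u1 - 2*u2)^(2*(d1:ℤ)+2*(d2:ℤ)-1))) Λ) Λ
    = if d1 = 0 ∧ d2 = 0 then (-1/4 : ℂ)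
      else -(1/2) * 4^(d1+d2) * ((2*d1+2*d2-1).choose (2*d1) : ℂ) := by
  by_cases h00 : d1 = 0 ∧ d2 = 0
  · obtain ⟨rfl, rfl⟩ := h00
    rw [if_pos ⟨rfl, rfl⟩]
    have hexp : (2*((0:ℕ):ℤ)+2*((0:ℕ):ℤ)-1) = (-1 : ℤ) := by norm_num
    simp only [hexp, zpow_neg_one, show 2*0+1 = 1 from rfl]
    have hgoalpre : (1 / (((1)! : ℂ) * ((1)! : ℂ))) = 1 := by norm_num
    rw [hgoalpre, one_mul, iteratedDeriv_one]
    have hEv : (fun u2 : ℂ => iteratedDeriv 1 (fun u1 : ℂ => u1*u2^2*(-2*u1-2*u2)⁻¹) Λ)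
        =ᶠ[𝓝 Λ] (fun u2 : ℂ => u2^2*(-2*Λ-2*u2)⁻¹ + Λ*u2^2*2*(((-2*Λ-2*u2)^2)⁻¹)) := by
      have hct : ContinuousAt (fun u2 : ℂ => -2*Λ-2*u2) Λ := by fun_prop
      have hne : ∀ᶠ u2 in 𝓝 Λ, -2*Λ-2*u2 ≠ 0 := by
        apply hct.eventually_ne
        intro h; apply hΛ; linear_combination (-1/4 : ℂ)*h
      filter_upwards [hne] with u2 hu2
      rw [iteratedDeriv_one]
      have w1 : HasDerivAt (fun u1 : ℂ => -2*u1-2*u2) (-2) Λ := by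
        simpa using ((hasDerivAt_id Λ).const_mul (-2:ℂ)).sub_const (2*u2)
      have w2 := w1.inv hu2
      have w3 : HasDerivAt (fun u1 : ℂ => u1*u2^2) (u2^2) Λ := by
        simpa using (hasDerivAt_id Λ).mul_const (u2^2)
      have w4 := w3.mul w2
      rw [(show HasDerivAt (fun u1 : ℂ => u1*u2^2*(-2*u1-2*u2)⁻¹) (u2^2*(-2*Λ-2*u2)⁻¹ + Λ*u2^2*(- -2/(-2*Λ-2*u2)^2)) Λ from w4).deriv]
      field_simp
    rw [hEv.deriv_eq]
    have hne0 : (-2*Λ-2*Λ : ℂ) ≠ 0 := by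
      intro h; apply hΛ; linear_combination (-1/4 : ℂ)*h
    have v1 : HasDerivAt (fun u2 : ℂ => -2*Λ-2*u2) (-2) Λ := by
      simpa using ((hasDerivAt_id Λ).const_mul (2:ℂ)).const_sub (-2*Λ)
    have t1 : HasDerivAt (fun u2 : ℂ => u2^2) (2*Λ) Λ := by
      simpa using hasDerivAt_pow 2 Λ
    have tA := t1.mul (v1.inv hne0)
    have s1 : HasDerivAt (fun u2 : ℂ => Λ*u2^2*2) (Λ*(2*Λ)*2) Λ := by
      simpa using ((hasDerivAt_pow 2 Λ).const_mul Λ).mul_const (2:ℂ)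
    have s2 := v1.pow 2
    have s3 := s2.inv (pow_ne_zero 2 hne0)
    have t2 := s1.mul s3
    have tfin := tA.add t2
    rw [(show HasDerivAt (fun u2 : ℂ => u2^2*(-2*Λ-2*u2)⁻¹ + Λ*u2^2*2*((-2*Λ-2*u2)^2)⁻¹) (2*Λ*(-2*Λ-2*Λ)⁻¹ + Λ^2*(- -2/(-2*Λ-2*Λ)^2) + (Λ*(2*Λ)*2*((-2*Λ-2*Λ)^2)⁻¹ + Λ*Λ^2*2*(-(((2:ℕ):ℂ)*(-2*Λ-2*Λ)^(2-1)*(-2))/((-2*Λ-2*Λ)^2)^2))) Λ from tfin).deriv, show (-2*Λ-2*Λ : ℂ) = -4*Λ by ring]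
    field_simp
    ring
  rw [if_neg h00]
  set k := 2*d1+2*d2-1 with hkdef
  have hzc : ∀ u2 : ℂ, (fun u1 : ℂ => u1 * u2^2 * ((-2*u1 - 2*u2)^(2*(d1:ℤ)+2*(d2:ℤ)-1)))
      = (fun u1 : ℂ => (-(u2^2)/2) * ((-2)*u1 + (-2*u2))^(k+1)
          + (-(u2^3)) * ((-2)*u1 + (-2*u2))^k) := by
    intro u2; funext u1
    have hk : (2*(d1:ℤ)+2*(d2:ℤ)-1) = (k:ℤ) := by simp only [hkdef]; omega
    rw [hk, zpow_natCast]; ring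
  have hinner : ∀ u2 : ℂ, iteratedDeriv (2*d1+1) (fun u1 : ℂ =>
        u1 * u2^2 * ((-2*u1 - 2*u2)^(2*(d1:ℤ)+2*(d2:ℤ)-1))) Λ
      = (-(u2^2)/2) * (-2)^(2*d1+1) * ((k+1).descFactorial (2*d1+1)) * ((-2)*Λ+(-2*u2))^(k+1-(2*d1+1))
        + (-(u2^3)) * (-2)^(2*d1+1) * (k.descFactorial (2*d1+1)) * ((-2)*Λ+(-2*u2))^(k-(2*d1+1)) := by
    intro u2
    rw [hzc u2, itadd (by fun_prop) (by fun_prop), pderiv, pderiv]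
  simp only [hinner]
  rcases Nat.eq_zero_or_pos d2 with hd2 | hd2
  · subst hd2
    have hd1 : 1 ≤ d1 := by rcases Nat.eq_zero_or_pos d1 with h|h; · exact absurd ⟨h, rfl⟩ h00
                            · exact h
    have hA : (k+1).descFactorial (2*d1+1) = 0 := Nat.descFactorial_of_lt (by simp only [hkdef]; omega)
    have hB : k.descFactorial (2*d1+1) = 0 := Nat.descFactorial_of_lt (by simp only [hkdef]; omega)
    simp only [hA, hB, Nat.cast_zero]
    have hz : (fun u2 : ℂ => -u2 ^ 2 / 2 * (-2) ^ (2 * d1 + 1) * 0 * (-2 * Λ + -2 * u2) ^ (k + 1 - (2 * d1 + 1)) +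
        -u2 ^ 3 * (-2) ^ (2 * d1 + 1) * 0 * (-2 * Λ + -2 * u2) ^ (k - (2 * d1 + 1)))
        = (fun u2 : ℂ => (0:ℂ) * ((1:ℂ)*u2+0)^0) := by
      funext u2; ring
    rw [hz, pderiv, Nat.choose_eq_zero_of_lt (by simp only [hkdef]; omega)]
    simp
  · obtain ⟨e, rfl⟩ : ∃ e, d2 = e + 1 := ⟨d2-1, by omega⟩
    have hp : k+1-(2*d1+1) = 2*e+1 := by simp only [hkdef]; omega
    have hq : k-(2*d1+1) = 2*e := by simp only [hkdef]; omega
    have hn2 : 2*(e+1)+1 = 2*e+3 := by ring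
    simp only [hp, hq, hn2]
    set A : ℂ := (-2:ℂ)^(2*d1+1) * ((k+1).descFactorial (2*d1+1) : ℂ) with hAdef
    set B : ℂ := (-2:ℂ)^(2*d1+1) * (k.descFactorial (2*d1+1) : ℂ) with hBdef
    have hout : (fun u2 : ℂ => -u2 ^ 2 / 2 * (-2) ^ (2 * d1 + 1) * ((k+1).descFactorial (2*d1+1) : ℂ) * (-2 * Λ + -2 * u2) ^ (2*e+1) +
        -u2 ^ 3 * (-2) ^ (2 * d1 + 1) * (k.descFactorial (2*d1+1) : ℂ) * (-2 * Λ + -2 * u2) ^ (2*e))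
        = (fun u2 : ℂ => ((B-A)/8) * ((-2)*u2+(-2*Λ))^(2*e+3)
            + ((-A*Λ/2 + 3*B*Λ/4) * ((-2)*u2+(-2*Λ))^(2*e+2)
            + ((-A*Λ^2/2 + 3*B*Λ^2/2) * ((-2)*u2+(-2*Λ))^(2*e+1)
            + (B*Λ^3) * ((-2)*u2+(-2*Λ))^(2*e)))) := by
      funext u2; simp only [hAdef, hBdef]; ring
    rw [hout, itadd (by fun_prop) (by fun_prop), itadd (by fun_prop) (by fun_prop),
      itadd (by fun_prop) (by fun_prop), pderiv, pderiv, pderiv, pderiv,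
      Nat.descFactorial_self,
      Nat.descFactorial_of_lt (by omega : 2*e+2 < 2*e+3),
      Nat.descFactorial_of_lt (by omega : 2*e+1 < 2*e+3),
      Nat.descFactorial_of_lt (by omega : 2*e < 2*e+3)]
    have hNat : (k+1).descFactorial (2*d1+1) = k.descFactorial (2*d1+1) + (2*d1+1)! * (k.choose (2*d1)) := by
      rw [Nat.descFactorial_eq_factorial_mul_choose, Nat.descFactorial_eq_factorial_mul_choose,
        Nat.choose_succ_succ' k (2*d1)]
      ring
    have hch : (2*d1+2*(e+1)-1).choose (2*d1) = k.choose (2*d1) := by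
      simp only [hkdef]
    have hpow : (-2:ℂ)^(2*d1+1) * (-2:ℂ)^(2*e+3) = 16 * 4^(d1+e) := by
      rw [← pow_add, show 2*d1+1+(2*e+3) = 2*(d1+e)+4 by omega, pow_add, pow_mul]
      norm_num; ring
    have h4 : (4:ℂ)^(d1+(e+1)) = 4^(d1+e)*4 := by
      rw [show d1+(e+1) = (d1+e)+1 by omega, pow_succ]
    simp only [hAdef, hBdef, hNat, hch, h4]
    have hf1 : ((2*d1+1)! : ℂ) ≠ 0 := Nat.cast_ne_zero.mpr (Nat.factorial_ne_zero _)
    have hf2 : ((2*(e+1)+1)! : ℂ) ≠ 0 := Nat.cast_ne_zero.mpr (Nat.factorial_ne_zero _)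
    have hf3 : ((2*e+3)! : ℂ) = ((2*(e+1)+1)! : ℂ) := by
      rw [show 2*(e+1)+1 = 2*e+3 from by ring]
    rw [hf3]
    push_cast
    field_simp
    ring_nf
    have hneg2 : ∀ m : ℕ, (-2:ℂ)^(m*2) = 4^m := by
      intro m; rw [mul_comm, pow_mul]; norm_num
    rw [hneg2 d1, hneg2 e]
    simp only [Nat.sub_self, pow_zero, mul_one]


lemma chle (n k : ℕ) : n.choose k ≤ 2^n := by
  rcases le_or_gt k n with h | h
  · calc n.choose k ≤ ∑ m ∈ Finset.range (n+1), n.choose m :=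
        Finset.single_le_sum (fun _ _ => Nat.zero_le _) (Finset.mem_range.mpr (by omega))
    _ = 2^n := Nat.sum_range_choose n
  · simp [Nat.choose_eq_zero_of_lt h]

lemma sumval (z1 z2 : ℂ) (hz1 : ‖z1‖ < 1/100) (hz2 : ‖z2‖ < 1/100) :
    HasSum (fun p : ℕ × ℕ => z1^p.1 * z2^p.2 *
      (if p.1 = 0 ∧ p.2 = 0 then (-1/4 : ℂ)
       else -(1/2) * 4^(p.1+p.2) * ((2*p.1+2*p.2-1).choose (2*p.1) : ℂ)))
      ((16*z2^2 - (1-4*z1)^2) / (4*(1 - 8*(z1+z2) + 16*(z1-z2)^2))) := by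
  have hz1' : ‖z1‖ < 1/100 := by exact hz1
  have hz2' : ‖z2‖ < 1/100 := by exact hz2
  obtain ⟨u, hu⟩ := IsAlgClosed.exists_pow_nat_eq (4*z1) (zero_lt_two)
  have hus : ‖u‖ < 1/5 := by
    have h1 : ‖u‖^2 = ‖4*z1‖ := by rw [← norm_pow, hu]
    have h2 : ‖(4:ℂ)*z1‖ < (1/5 : ℝ)^2 := by
      rw [norm_mul]
      simp only [Complex.norm_ofNat]
      norm_num
      linarith
    exact lt_of_pow_lt_pow_left₀ 2 (by norm_num) (by rw [h1]; exact h2)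
  have hu1 : (4/5 : ℝ) ≤ ‖1 - u‖ := by
    have := norm_sub_norm_le (1:ℂ) u
    rw [norm_one] at this; linarith
  have hu2 : (4/5 : ℝ) ≤ ‖1 + u‖ := by
    have := norm_sub_norm_le (1:ℂ) (-u)
    rw [norm_one, norm_neg, sub_neg_eq_add] at this; linarith
  have h1u : (1 - u) ≠ 0 := by
    intro h; rw [h, norm_zero] at hu1; linarith
  have h2u : (1 + u) ≠ 0 := by
    intro h; rw [h, norm_zero] at hu2; linarith
  have hA : ((1-u)^2 - 4*z2) ≠ 0 := by
    intro h
    have h' : (1-u)^2 = 4*z2 := by linear_combination h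
    have := congrArg norm h'
    rw [norm_pow, norm_mul] at this
    simp only [Complex.norm_ofNat] at this
    nlinarith
  have hB : ((1+u)^2 - 4*z2) ≠ 0 := by
    intro h
    have h' : (1+u)^2 = 4*z2 := by linear_combination h
    have := congrArg norm h'
    rw [norm_pow, norm_mul] at this
    simp only [Complex.norm_ofNat] at this
    nlinarith
  set r : ℂ := 4*z2/(1-u)^2 with hrdef
  set s : ℂ := 4*z2/(1+u)^2 with hsdef
  have hrn : ‖r‖ < 1 := by
    rw [hrdef, norm_div, norm_mul, norm_pow]
    simp only [Complex.norm_ofNat]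
    rw [div_lt_one (by nlinarith)]
    nlinarith
  have hsn : ‖s‖ < 1 := by
    rw [hsdef, norm_div, norm_mul, norm_pow]
    simp only [Complex.norm_ofNat]
    rw [div_lt_one (by nlinarith)]
    nlinarith
  set R : ℕ → ℂ := fun d2 => -(1/4)*(r^d2 + s^d2) + (if d2 = 0 then (1/4:ℂ) else 0) with hRdef
  have hrow : ∀ d2 : ℕ, HasSum (fun d1 : ℕ => z1^d1 * z2^d2 *
      (if d1 = 0 ∧ d2 = 0 then (-1/4 : ℂ)
       else -(1/2) * 4^(d1+d2) * ((2*d1+2*d2-1).choose (2*d1) : ℂ))) (R d2) := by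
    intro d2
    rcases Nat.eq_zero_or_pos d2 with rfl | hd2pos
    · have hfe : (fun d1 : ℕ => z1^d1 * z2^0 *
          (if d1 = 0 ∧ 0 = 0 then (-1/4 : ℂ)
           else -(1/2) * 4^(d1+0) * ((2*d1+2*0-1).choose (2*d1) : ℂ)))
          = (fun d1 : ℕ => if d1 = 0 then (-1/4 : ℂ) else 0) := by
        funext d1
        rcases Nat.eq_zero_or_pos d1 with rfl | hd1
        · simp
        · rw [if_neg (by omega), if_neg (fun h => by omega),
            Nat.choose_eq_zero_of_lt (by omega)]
          simp
      rw [hfe]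
      have : R 0 = -1/4 := by rw [hRdef]; norm_num
      rw [this]
      exact hasSum_ite_eq 0 (-1/4 : ℂ)
    · obtain ⟨e, rfl⟩ : ∃ e, d2 = e + 1 := ⟨d2-1, by omega⟩
      have hF := hasSum_choose_mul_geometric_of_norm_lt_one (𝕜 := ℂ) (2*e+1)
        (show ‖u‖ < 1 by linarith)
      have hG := hasSum_choose_mul_geometric_of_norm_lt_one (𝕜 := ℂ) (2*e+1)
        (show ‖-u‖ < 1 by rw [norm_neg]; linarith)
      have hφ := (hF.add hG).mul_left (-(1/4)*(4*z2)^(e+1))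
      have hinj : Function.Injective (fun d1 : ℕ => 2*d1) := fun a b h => by dsimp at h; omega
      have hvan : ∀ n : ℕ, n ∉ Set.range (fun d1 : ℕ => 2*d1) →
          (-(1/4)*(4*z2)^(e+1)) * (((n + (2*e+1)).choose (2*e+1) : ℂ) * u^n
            + ((n + (2*e+1)).choose (2*e+1) : ℂ) * (-u)^n) = 0 := by
        intro n hn
        have hodd : Odd n := by
          rcases Nat.even_or_odd n with h | h
          · obtain ⟨m, rfl⟩ := h
            exact absurd ⟨m, by dsimp; omega⟩ hn
          · exact h
        rw [hodd.neg_pow]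
        ring
      have hcomp0 := (hinj.hasSum_iff hvan).mpr hφ
      have hcomp : HasSum (fun d1 : ℕ => (-(1/4)*(4*z2)^(e+1)) *
            (((2*d1 + (2*e+1)).choose (2*e+1) : ℂ) * u^(2*d1)
              + ((2*d1 + (2*e+1)).choose (2*e+1) : ℂ) * (-u)^(2*d1)))
          (-(1/4)*(4*z2)^(e+1) * (1/(1-u)^(2*e+1+1) + 1/(1 - -u)^(2*e+1+1))) := hcomp0
      rw [sub_neg_eq_add] at hcomp
      have hfe : (fun d1 : ℕ => (-(1/4)*(4*z2)^(e+1)) *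
            (((2*d1 + (2*e+1)).choose (2*e+1) : ℂ) * u^(2*d1)
              + ((2*d1 + (2*e+1)).choose (2*e+1) : ℂ) * (-u)^(2*d1)))
          = (fun d1 : ℕ => z1^d1 * z2^(e+1) *
            (if d1 = 0 ∧ e + 1 = 0 then (-1/4 : ℂ)
             else -(1/2) * 4^(d1+(e+1)) * ((2*d1+2*(e+1)-1).choose (2*d1) : ℂ))) := by
        funext d1
        rw [if_neg (fun h => by omega)]
        have hch : (2*d1+2*(e+1)-1).choose (2*d1) = (2*d1 + (2*e+1)).choose (2*e+1) := by
          rw [show 2*d1+2*(e+1)-1 = 2*d1 + (2*e+1) from by omega]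
          exact (Nat.choose_symm_of_eq_add (by omega)).symm
        rw [hch, Even.neg_pow ⟨d1, by ring⟩, pow_mul, hu,
          show d1+(e+1) = d1+e+1 from by omega]
        push_cast
        ring
      rw [hfe] at hcomp
      convert hcomp using 1
      rw [hRdef]
      simp only [Nat.add_eq_zero, one_ne_zero, and_false, if_false, add_zero]
      rw [hrdef, hsdef, div_pow, div_pow, ← pow_mul, ← pow_mul,
        show 2*(e+1) = 2*e+1+1 from by omega]
      field_simp
  have hgr := hasSum_geometric_of_norm_lt_one hrn
  have hgs := hasSum_geometric_of_norm_lt_one hsn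
  have hcol : HasSum R (-(1/4)*((1-r)⁻¹ + (1-s)⁻¹) + 1/4) :=
    ((hgr.add hgs).mul_left (-(1/4))).add (hasSum_ite_eq 0 (1/4:ℂ))
  have hbd : ∀ p : ℕ×ℕ, ‖z1^p.1 * z2^p.2 *
      (if p.1 = 0 ∧ p.2 = 0 then (-1/4 : ℂ)
       else -(1/2) * 4^(p.1+p.2) * ((2*p.1+2*p.2-1).choose (2*p.1) : ℂ))‖
      ≤ (16/100:ℝ)^p.1 * (16/100:ℝ)^p.2 := by
    rintro ⟨d1, d2⟩
    by_cases h : d1 = 0 ∧ d2 = 0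
    · obtain ⟨rfl, rfl⟩ := h
      norm_num
    · rw [if_neg h]
      set N := d1 + d2 with hN
      set C := (2*d1+2*d2-1).choose (2*d1) with hC
      have hCle : (C : ℝ) ≤ 4^N := by
        calc (C : ℝ) ≤ ((2^(2*d1+2*d2-1) : ℕ) : ℝ) := by exact_mod_cast chle _ _
        _ ≤ (2:ℝ)^(2*N) := by
            push_cast
            apply pow_le_pow_right₀ (by norm_num) (by omega)
        _ = 4^N := by rw [show (4:ℝ) = 2^2 by norm_num, ← pow_mul]
      have hnc : ‖(-(1/2) * 4^N * (C : ℂ))‖ = (1/2) * 4^N * (C:ℝ) := by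
        rw [norm_mul, norm_mul, norm_pow]
        simp [Complex.norm_natCast]
      rw [norm_mul, norm_mul, norm_pow, norm_pow, hnc]
      have e1 : ‖z1‖^d1 ≤ (1/100:ℝ)^d1 := pow_le_pow_left₀ (norm_nonneg _) (le_of_lt hz1') d1
      have e2 : ‖z2‖^d2 ≤ (1/100:ℝ)^d2 := pow_le_pow_left₀ (norm_nonneg _) (le_of_lt hz2') d2
      have e3 : (1/2) * 4^N * (C:ℝ) ≤ 4^N * 4^N := by
        nlinarith [mul_le_mul_of_nonneg_left hCle (pow_nonneg (show (0:ℝ) ≤ 4 by norm_num) N),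
          mul_nonneg (pow_nonneg (show (0:ℝ) ≤ 4 by norm_num) N)
            (show (0:ℝ) ≤ (C:ℝ) from Nat.cast_nonneg C)]
      calc ‖z1‖^d1 * ‖z2‖^d2 * ((1/2) * 4^N * (C:ℝ))
          ≤ (1/100:ℝ)^d1 * (1/100:ℝ)^d2 * (4^N * 4^N) := by
            have h0b : (0:ℝ) ≤ ‖z2‖^d2 := pow_nonneg (norm_nonneg _) _
            have h0c : (0:ℝ) ≤ (1/2) * 4^N * (C:ℝ) := by positivity
            have h0d : (0:ℝ) ≤ (1/100:ℝ)^d1 := by positivity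
            have h0de : (0:ℝ) ≤ (1/100:ℝ)^d1 * (1/100:ℝ)^d2 := by positivity
            exact mul_le_mul (mul_le_mul e1 e2 h0b h0d) e3 h0c h0de
        _ = (16/100:ℝ)^d1 * (16/100:ℝ)^d2 := by
            have h64 : (4:ℝ)^N * 4^N = 16^N := by rw [← mul_pow]; norm_num
            have h16a : (16/100:ℝ)^d1 = 16^d1 * (1/100)^d1 := by rw [← mul_pow]; norm_num
            have h16b : (16/100:ℝ)^d2 = 16^d2 * (1/100)^d2 := by rw [← mul_pow]; norm_num
            rw [h64, h16a, h16b, hN, pow_add]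
            ring
  have hgeo : Summable (fun q : ℕ×ℕ => (16/100:ℝ)^q.1 * (16/100:ℝ)^q.2) :=
    (summable_geometric_of_lt_one (by norm_num) (by norm_num)).mul_of_nonneg
      (summable_geometric_of_lt_one (by norm_num) (by norm_num))
      (fun _ => by positivity) (fun _ => by positivity)
  have hsw : Summable (fun q : ℕ×ℕ => z1^q.2 * z2^q.1 *
      (if q.2 = 0 ∧ q.1 = 0 then (-1/4 : ℂ)
       else -(1/2) * 4^(q.2+q.1) * ((2*q.2+2*q.1-1).choose (2*q.2) : ℂ))) := by
    apply Summable.of_norm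
    exact Summable.of_nonneg_of_le (fun _ => norm_nonneg _)
      (fun q => le_of_le_of_eq (hbd (q.2, q.1)) (mul_comm _ _)) hgeo
  obtain ⟨S, hS⟩ := hsw
  have hcol2 : HasSum R S := hS.prod_fiberwise (fun d2 => hrow d2)
  have hST : S = -(1/4)*((1-r)⁻¹ + (1-s)⁻¹) + 1/4 := hcol2.unique hcol
  rw [hST] at hS
  have hfinal : HasSum (fun p : ℕ×ℕ => z1^p.1 * z2^p.2 *
      (if p.1 = 0 ∧ p.2 = 0 then (-1/4 : ℂ)
       else -(1/2) * 4^(p.1+p.2) * ((2*p.1+2*p.2-1).choose (2*p.1) : ℂ)))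
      (-(1/4)*((1-r)⁻¹ + (1-s)⁻¹) + 1/4) :=
    (Equiv.prodComm ℕ ℕ).hasSum_iff.mp hS
  have hz1u : z1 = u^2/4 := by rw [hu]; ring
  have hfac : (1 - 8*(z1+z2) + 16*(z1-z2)^2) = ((1-u)^2-4*z2)*((1+u)^2-4*z2) := by
    rw [hz1u]; ring
  have h1r : (1:ℂ) - r = ((1-u)^2 - 4*z2)/(1-u)^2 := by
    rw [hrdef]; field_simp
  have h1s : (1:ℂ) - s = ((1+u)^2 - 4*z2)/(1+u)^2 := by
    rw [hsdef]; field_simp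
  have hval : -(1/4)*((1-r)⁻¹ + (1-s)⁻¹) + 1/4
      = (16*z2^2 - (1-4*z1)^2) / (4*(1 - 8*(z1+z2) + 16*(z1-z2)^2)) := by
    rw [h1r, h1s, hfac, hz1u]
    field_simp
    ring
  rw [← hval]
  exact hfinal


theorem stmt11 (Λ : ℂ) (hΛ : Λ ≠ 0) (c : ℕ → ℕ → ℂ)
    (hc : ∀ d1 d2 : ℕ, c d1 d2 =
      (1 / (((2*d1+1)! : ℂ) * ((2*d2+1)! : ℂ))) *
      iteratedDeriv (2*d2+1) (fun u2 : ℂ =>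
        iteratedDeriv (2*d1+1) (fun u1 : ℂ =>
          u1 * u2^2 * ((-2*u1 - 2*u2)^(2*(d1:ℤ)+2*(d2:ℤ)-1))) Λ) Λ) :
    ∀ z1 z2 : ℂ, ‖z1‖ < 1/100 → ‖z2‖ < 1/100 →
      HasSum (fun p : ℕ × ℕ => z1^p.1 * z2^p.2 * c p.1 p.2)
        ((16*z2^2 - (1-4*z1)^2) / (4*(1 - 8*(z1+z2) + 16*(z1-z2)^2))) := by
  intro z1 z2 hz1 hz2
  have hfe : (fun p : ℕ × ℕ => z1^p.1 * z2^p.2 * c p.1 p.2)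
      = (fun p : ℕ × ℕ => z1^p.1 * z2^p.2 *
        (if p.1 = 0 ∧ p.2 = 0 then (-1/4 : ℂ)
         else -(1/2) * 4^(p.1+p.2) * ((2*p.1+2*p.2-1).choose (2*p.1) : ℂ))) := by
    funext p
    rw [hc p.1 p.2, cval Λ hΛ p.1 p.2]
  rw [hfe]
  exact sumval z1 z2 hz1 hz2
end

section
/- Let λ, p ∈ ℂ with λ ≠ 0, p ≠ 1 and 2p+1 ≠ 0, and define G : ℂ → ℂ → ℂ by G u1 u2 = u1^3 / ((-2*u1 - u2) * (u1 - p*λ) * (u2 - λ)^2 * (u1 - u2)). Then there exists ε > 0 such that for all real r1, r2 with 0 < r2 < r1 < ε: (1/(2πi))^2 · ∮_{|u2-λ|=r2} (∮_{|u1-pλ|=r1} G u1 u2 du1) du2 + (1/(2πi))^2 · ∮_{|u1-λ|=r1} (∮_{|u2-λ|=r2} G u1 u2 du2) du1 = -((p+1)*(3p+1)) / (3*(2p+1)^2). That is, the sum of the iterated residues of G at (pλ, λ) and (λ, λ) equals -6x with x = (p+1)(3p+1)/(18(2p+1)^2). -/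
open Metric Set

open scoped Nat

lemma nzlin {X y : ℂ} (c1 c2 u v : ℂ) (h : X - y = c1*u + c2*v) {r s : ℝ}
    (hu : ‖u‖ ≤ r) (hv : ‖v‖ ≤ s) (hb : ‖c1‖*r + ‖c2‖*s < ‖X‖) : y ≠ 0 := by
  intro h0
  have hX : X = c1*u + c2*v := by rw [h0, sub_zero] at h; exact h
  have : ‖X‖ ≤ ‖c1‖*r + ‖c2‖*s := by
    calc ‖X‖ = ‖c1*u + c2*v‖ := by rw [hX]
      _ ≤ ‖c1*u‖ + ‖c2*v‖ := norm_add_le _ _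
      _ = ‖c1‖*‖u‖ + ‖c2‖*‖v‖ := by rw [norm_mul, norm_mul]
      _ ≤ ‖c1‖*r + ‖c2‖*s := by gcongr
  exact absurd (this.trans_lt hb) (lt_irrefl _)

lemma nzlin1 {X y : ℂ} (c1 u : ℂ) (h : X - y = c1*u) {r : ℝ}
    (hu : ‖u‖ ≤ r) (hb : ‖c1‖*r < ‖X‖) : y ≠ 0 := by
  intro h0
  have hX : X = c1*u := by rw [h0, sub_zero] at h; exact h
  have : ‖X‖ ≤ ‖c1‖*r := by
    calc ‖X‖ = ‖c1‖*‖u‖ := by rw [hX, norm_mul]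
      _ ≤ ‖c1‖*r := by gcongr
  exact absurd (this.trans_lt hb) (lt_irrefl _)

/-- residue of a double pole at the center. -/
lemma L2 {R : ℝ} (hR : 0 < R) {c : ℂ} {f : ℂ → ℂ}
    (hf : ∀ z ∈ Metric.closedBall c R, DifferentiableAt ℂ f z) :
    (∮ z in C(c, R), ((z - c)^2)⁻¹ * f z) = (2 * (Real.pi:ℂ) * Complex.I) * deriv f c := by
  have hcont : ContinuousOn (dslope f c) (closedBall c R) := by
    intro z hz
    rcases eq_or_ne z c with rfl | hzc
    · exact (continuousAt_dslope_same.2 (hf _ hz)).continuousWithinAt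
    · exact ((continuousAt_dslope_of_ne hzc).2 (hf _ hz).continuousAt).continuousWithinAt
  have hdiff : ∀ x ∈ ball c R \ {c}, DifferentiableAt ℂ (dslope f c) x := fun x hx =>
    (differentiableAt_dslope_of_ne hx.2).2 (hf _ (ball_subset_closedBall hx.1))
  have hkey := Complex.circleIntegral_sub_inv_smul_of_differentiable_on_off_countable
    (Set.countable_singleton c) (mem_ball_self hR) hcont hdiff
  have hEq : Set.EqOn (fun z => (z - c)⁻¹ • dslope f c z)
      (fun z => ((z - c)^2)⁻¹ * f z - f c * (z - c) ^ (-2 : ℤ)) (sphere c R) := by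
    intro z hz
    have hzc : z ≠ c := by
      intro h; subst h; rw [mem_sphere, dist_self] at hz; exact hR.ne hz
    have h1 : z - c ≠ 0 := sub_ne_zero.2 hzc
    have hds : dslope f c z = (f z - f c) / (z - c) := by
      rw [dslope_of_ne f hzc, slope_def_field]
    simp only [smul_eq_mul, hds, zpow_neg, zpow_two]
    field_simp
  have hInt1 : CircleIntegrable (fun z => ((z - c)^2)⁻¹ * f z) c R := by
    refine ContinuousOn.circleIntegrable hR.le ?_
    intro z hz
    have hzc : z ≠ c := by
      intro h; subst h; rw [mem_sphere, dist_self] at hz; exact hR.ne hz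
    exact (((continuousWithinAt_id.sub continuousWithinAt_const).pow 2).inv₀
      (pow_ne_zero _ (sub_ne_zero.2 hzc))).mul
      ((hf z (sphere_subset_closedBall hz)).continuousAt.continuousWithinAt)
  have hInt2 : CircleIntegrable (fun z => f c * (z - c) ^ (-2 : ℤ)) c R := by
    refine ContinuousOn.circleIntegrable hR.le ?_
    intro z hz
    have hzc : z ≠ c := by
      intro h; subst h; rw [mem_sphere, dist_self] at hz; exact hR.ne hz
    exact continuousWithinAt_const.mul
      (((continuousWithinAt_id.sub continuousWithinAt_const).zpow₀ _
        (Or.inl (sub_ne_zero.2 hzc))))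
  have hz2 : (∮ z in C(c, R), f c * (z - c) ^ (-2 : ℤ)) = 0 := by
    rw [circleIntegral.integral_const_mul,
      circleIntegral.integral_sub_zpow_of_ne (by decide) c c R, mul_zero]
  have hsplit : (∮ z in C(c, R), (z - c)⁻¹ • dslope f c z) =
      (∮ z in C(c, R), ((z - c)^2)⁻¹ * f z) - (∮ z in C(c, R), f c * (z - c) ^ (-2 : ℤ)) := by
    rw [circleIntegral.integral_congr hR.le hEq, circleIntegral.integral_sub hInt1 hInt2]
  rw [hkey] at hsplit
  rw [hz2, sub_zero] at hsplit
  rw [← hsplit, smul_eq_mul, dslope_same]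

set_option maxHeartbeats 1000000 in
theorem stmt13 (Λ p : ℂ) (hΛ : Λ ≠ 0) (hp1 : p ≠ 1) (hp2 : 2*p + 1 ≠ 0)
    (G : ℂ → ℂ → ℂ)
    (hG : ∀ u1 u2 : ℂ, G u1 u2 =
      u1^3 / ((-2*u1 - u2) * (u1 - p*Λ) * (u2 - Λ)^2 * (u1 - u2))) :
    ∃ ε > 0, ∀ r1 r2 : ℝ, 0 < r2 → r2 < r1 → r1 < ε →
      (1/(2*(Real.pi : ℂ)*Complex.I))^2 *
        (∮ u2 in C(Λ, r2), (∮ u1 in C(p*Λ, r1), G u1 u2)) +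
      (1/(2*(Real.pi : ℂ)*Complex.I))^2 *
        (∮ u1 in C(Λ, r1), (∮ u2 in C(Λ, r2), G u1 u2)) =
      -((p+1)*(3*p+1)) / (3*(2*p+1)^2) := by
  have hp1' : p - 1 ≠ 0 := sub_ne_zero.2 hp1
  have hA1 : 0 < ‖Λ*(p-1)‖ := norm_pos_iff.2 (mul_ne_zero hΛ hp1')
  have hA2 : 0 < ‖Λ*(2*p+1)‖ := norm_pos_iff.2 (mul_ne_zero hΛ hp2)
  have hA3 : 0 < ‖Λ‖ := norm_pos_iff.2 hΛ
  refine ⟨min ‖Λ*(p-1)‖ (min ‖Λ*(2*p+1)‖ ‖Λ‖) / 4,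
    div_pos (lt_min hA1 (lt_min hA2 hA3)) (by norm_num), ?_⟩
  intro r1 r2 hr2 hr21 hr1ε
  have hr1 : 0 < r1 := hr2.trans hr21
  have hε1 : 4*r1 < ‖Λ*(p-1)‖ := by
    have := min_le_left ‖Λ*(p-1)‖ (min ‖Λ*(2*p+1)‖ ‖Λ‖); linarith
  have hε2 : 4*r1 < ‖Λ*(2*p+1)‖ := by
    have h := (min_le_right ‖Λ*(p-1)‖ (min ‖Λ*(2*p+1)‖ ‖Λ‖)).trans
      (min_le_left ‖Λ*(2*p+1)‖ ‖Λ‖); linarith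
  have hε3 : 4*r1 < ‖Λ‖ := by
    have h := (min_le_right ‖Λ*(p-1)‖ (min ‖Λ*(2*p+1)‖ ‖Λ‖)).trans
      (min_le_right ‖Λ*(2*p+1)‖ ‖Λ‖); linarith
  have hn2 : ‖(2:ℂ)‖ = 2 := by norm_num
  have hn1 : ‖(1:ℂ)‖ = 1 := norm_one
  have hnm2 : ‖(-2:ℂ)‖ = 2 := by rw [norm_neg, hn2]
  have hnm1 : ‖(-1:ℂ)‖ = 1 := by rw [norm_neg, hn1]
  have h3Λ : ‖2*Λ + Λ‖ = 3*‖Λ‖ := by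
    have e : 2*Λ + Λ = (3:ℂ)*Λ := by ring
    rw [e, norm_mul]; norm_num
  -- basic nonvanishing at the special points
  have d1 : (-2*(p*Λ) - Λ) ≠ 0 := by
    have e : -2*(p*Λ) - Λ = -(Λ*(2*p+1)) := by ring
    rw [e]; exact neg_ne_zero.2 (mul_ne_zero hΛ hp2)
  have d2 : (p*Λ - Λ) ≠ 0 := by
    have e : p*Λ - Λ = Λ*(p-1) := by ring
    rw [e]; exact mul_ne_zero hΛ hp1'
  have d3 : (Λ - p*Λ) ≠ 0 := by
    have e : Λ - p*Λ = -(Λ*(p-1)) := by ring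
    rw [e]; exact neg_ne_zero.2 (mul_ne_zero hΛ hp1')
  have d4 : (2*Λ + Λ) ≠ 0 := by
    have e : 2*Λ + Λ = Λ*3 := by ring
    rw [e]; exact mul_ne_zero hΛ (by norm_num)
  -- Part A, inner integral
  have innerA : ∀ u2 ∈ sphere Λ r2, (∮ u1 in C(p*Λ, r1), G u1 u2)
      = ((u2 - Λ)^2)⁻¹ *
        ((2*(Real.pi:ℂ)*Complex.I) * (p*Λ)^3 / ((-2*(p*Λ) - u2) * (p*Λ - u2))) := by
    intro u2 hu2
    have hu2' : ‖u2 - Λ‖ = r2 := by rwa [mem_sphere, dist_eq_norm] at hu2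
    have n2 : u2 - Λ ≠ 0 := by
      intro h; rw [h, norm_zero] at hu2'; exact hr2.ne hu2'
    have hdiff1 : DifferentiableOn ℂ
        (fun z => z^3 / ((-2*z - u2) * (u2 - Λ)^2 * (z - u2))) (closedBall (p*Λ) r1) := by
      intro z hz
      have hz' : ‖z - p*Λ‖ ≤ r1 := by rwa [mem_closedBall, dist_eq_norm] at hz
      have n1 : -2*z - u2 ≠ 0 := by
        refine nzlin (X := -(Λ*(2*p+1))) 2 1 (z - p*Λ) (u2 - Λ) (by ring) hz' hu2'.le ?_
        rw [hn2, hn1, norm_neg]; linarith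
      have n3 : z - u2 ≠ 0 := by
        refine nzlin (X := Λ*(p-1)) (-1) 1 (z - p*Λ) (u2 - Λ) (by ring) hz' hu2'.le ?_
        rw [hnm1, hn1]; linarith
      refine DifferentiableAt.differentiableWithinAt ?_
      exact (differentiableAt_pow 3).div (by fun_prop)
        (mul_ne_zero (mul_ne_zero n1 (pow_ne_zero 2 n2)) n3)
    have hc := hdiff1.circleIntegral_sub_inv_smul (mem_ball_self hr1)
    calc (∮ u1 in C(p*Λ, r1), G u1 u2)
        = ∮ z in C(p*Λ, r1), (z - p*Λ)⁻¹ • (z^3 / ((-2*z - u2) * (u2 - Λ)^2 * (z - u2))) := by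
          refine circleIntegral.integral_congr hr1.le fun z _ => ?_
          simp only [hG, smul_eq_mul, div_eq_mul_inv, mul_inv]; ring
      _ = (2*(Real.pi:ℂ)*Complex.I) •
            ((p*Λ)^3 / ((-2*(p*Λ) - u2) * (u2 - Λ)^2 * (p*Λ - u2))) := hc
      _ = ((u2 - Λ)^2)⁻¹ *
            ((2*(Real.pi:ℂ)*Complex.I) * (p*Λ)^3 / ((-2*(p*Λ) - u2) * (p*Λ - u2))) := by
          simp only [smul_eq_mul, div_eq_mul_inv, mul_inv]; ring
  -- Part A, outer integral
  have hFAd : HasDerivAt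
      (fun w => (2*(Real.pi:ℂ)*Complex.I) * (p*Λ)^3 / ((-2*(p*Λ) - w) * (p*Λ - w)))
      (-(2*(Real.pi:ℂ)*Complex.I) * (p^3*(p+2)) / ((2*p+1)^2*(p-1)^2)) Λ := by
    have h1 : HasDerivAt (fun w : ℂ => -2*(p*Λ) - w) (-1 : ℂ) Λ := by
      simpa using (hasDerivAt_id Λ).const_sub (-2*(p*Λ))
    have h2 : HasDerivAt (fun w : ℂ => p*Λ - w) (-1 : ℂ) Λ := by
      simpa using (hasDerivAt_id Λ).const_sub (p*Λ)
    have h := (hasDerivAt_const Λ ((2*(Real.pi:ℂ)*Complex.I) * (p*Λ)^3)).div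
      (h1.mul h2) (mul_ne_zero d1 d2)
    refine HasDerivAt.congr_deriv h (Eq.symm ?_)
    dsimp only [Pi.mul_apply, Pi.pow_apply]
    rw [div_eq_div_iff (mul_ne_zero (pow_ne_zero 2 hp2) (pow_ne_zero 2 hp1'))
      (pow_ne_zero 2 (mul_ne_zero d1 d2))]
    ring
  have hFAdiff : ∀ z ∈ closedBall Λ r2, DifferentiableAt ℂ
      (fun w => (2*(Real.pi:ℂ)*Complex.I) * (p*Λ)^3 / ((-2*(p*Λ) - w) * (p*Λ - w))) z := by
    intro z hz
    have hz' : ‖z - Λ‖ ≤ r2 := by rwa [mem_closedBall, dist_eq_norm] at hz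
    have m1 : -2*(p*Λ) - z ≠ 0 := by
      refine nzlin1 (X := -(Λ*(2*p+1))) 1 (z - Λ) (by ring) hz' ?_
      rw [hn1, norm_neg]; linarith
    have m2 : p*Λ - z ≠ 0 := by
      refine nzlin1 (X := Λ*(p-1)) 1 (z - Λ) (by ring) hz' ?_
      rw [hn1]; linarith
    exact (differentiableAt_const _).div (by fun_prop) (mul_ne_zero m1 m2)
  have houterA : (∮ u2 in C(Λ, r2), (∮ u1 in C(p*Λ, r1), G u1 u2))
      = (2*(Real.pi:ℂ)*Complex.I) *
        (-(2*(Real.pi:ℂ)*Complex.I) * (p^3*(p+2)) / ((2*p+1)^2*(p-1)^2)) := by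
    calc (∮ u2 in C(Λ, r2), (∮ u1 in C(p*Λ, r1), G u1 u2))
        = ∮ u2 in C(Λ, r2), ((u2 - Λ)^2)⁻¹ *
            ((2*(Real.pi:ℂ)*Complex.I) * (p*Λ)^3 / ((-2*(p*Λ) - u2) * (p*Λ - u2))) :=
          circleIntegral.integral_congr hr2.le (fun u2 hu2 => innerA u2 hu2)
      _ = (2*(Real.pi:ℂ)*Complex.I) * deriv
            (fun w => (2*(Real.pi:ℂ)*Complex.I) * (p*Λ)^3 / ((-2*(p*Λ) - w) * (p*Λ - w))) Λ :=
          L2 hr2 hFAdiff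
      _ = (2*(Real.pi:ℂ)*Complex.I) *
            (-(2*(Real.pi:ℂ)*Complex.I) * (p^3*(p+2)) / ((2*p+1)^2*(p-1)^2)) := by
          rw [hFAd.deriv]
  -- Part B, inner integral
  have innerB : ∀ u1 ∈ sphere Λ r1, (∮ u2 in C(Λ, r2), G u1 u2)
      = ((u1 - Λ)^2)⁻¹ *
        ((2*(Real.pi:ℂ)*Complex.I) * (-(u1^3*(u1+2*Λ))) / ((u1 - p*Λ) * (2*u1+Λ)^2)) := by
    intro u1 hu1
    have hu1' : ‖u1 - Λ‖ = r1 := by rwa [mem_sphere, dist_eq_norm] at hu1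
    have b3 : u1 - Λ ≠ 0 := by
      intro h; rw [h, norm_zero] at hu1'; exact hr1.ne hu1'
    have b2 : u1 - p*Λ ≠ 0 := by
      refine nzlin1 (X := -(Λ*(p-1))) (-1) (u1 - Λ) (by ring) hu1'.le ?_
      rw [hnm1, norm_neg]; linarith
    have b4 : 2*u1 + Λ ≠ 0 := by
      refine nzlin1 (X := 2*Λ + Λ) (-2) (u1 - Λ) (by ring) hu1'.le ?_
      rw [hnm2, h3Λ]; linarith
    have b1 : -2*u1 - Λ ≠ 0 := by
      intro h; apply b4
      have e : 2*u1 + Λ = -(-2*u1 - Λ) := by ring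
      rw [e, h, neg_zero]
    have hW : HasDerivAt (fun w => u1^3 / ((-2*u1 - w) * (u1 - p*Λ) * (u1 - w)))
        (-(u1^3*(u1+2*Λ)) / ((u1 - p*Λ) * (2*u1+Λ)^2 * (u1-Λ)^2)) Λ := by
      have h0 : HasDerivAt (fun w : ℂ => -2*u1 - w) (-1 : ℂ) Λ := by
        simpa using (hasDerivAt_id Λ).const_sub (-2*u1)
      have h1 : HasDerivAt (fun w : ℂ => (-2*u1 - w) * (u1 - p*Λ)) (-1 * (u1 - p*Λ)) Λ :=
        h0.mul_const _
      have h2 : HasDerivAt (fun w : ℂ => u1 - w) (-1 : ℂ) Λ := by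
        simpa using (hasDerivAt_id Λ).const_sub u1
      have h := (hasDerivAt_const Λ (u1^3)).div (h1.mul h2)
        (mul_ne_zero (mul_ne_zero b1 b2) b3)
      refine HasDerivAt.congr_deriv h (Eq.symm ?_)
      dsimp only [Pi.mul_apply, Pi.pow_apply]
      rw [div_eq_div_iff (mul_ne_zero (mul_ne_zero b2 (pow_ne_zero 2 b4)) (pow_ne_zero 2 b3))
        (pow_ne_zero 2 (mul_ne_zero (mul_ne_zero b1 b2) b3))]
      ring
    have hstep : (∮ u2 in C(Λ, r2), G u1 u2)
        = (2*(Real.pi:ℂ)*Complex.I) *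
          deriv (fun w => u1^3 / ((-2*u1 - w) * (u1 - p*Λ) * (u1 - w))) Λ := by
      calc (∮ u2 in C(Λ, r2), G u1 u2)
          = ∮ w in C(Λ, r2), ((w - Λ)^2)⁻¹ *
              (u1^3 / ((-2*u1 - w) * (u1 - p*Λ) * (u1 - w))) := by
            refine circleIntegral.integral_congr hr2.le fun w _ => ?_
            simp only [hG, div_eq_mul_inv, mul_inv]; ring
        _ = (2*(Real.pi:ℂ)*Complex.I) *
              deriv (fun w => u1^3 / ((-2*u1 - w) * (u1 - p*Λ) * (u1 - w))) Λ := by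
            refine L2 hr2 ?_
            intro z hz
            have hz' : ‖z - Λ‖ ≤ r2 := by rwa [mem_closedBall, dist_eq_norm] at hz
            have c1 : -2*u1 - z ≠ 0 := by
              refine nzlin (X := -(2*Λ + Λ)) 2 1 (u1 - Λ) (z - Λ) (by ring)
                hu1'.le hz' ?_
              rw [hn2, hn1, norm_neg, h3Λ]; linarith
            have c3 : u1 - z ≠ 0 := by
              refine nzlin1 (X := u1 - Λ) 1 (z - Λ) (by ring) hz' ?_
              rw [hn1, hu1']; linarith
            exact (differentiableAt_const _).div (by fun_prop)
              (mul_ne_zero (mul_ne_zero c1 b2) c3)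
    rw [hstep, hW.deriv]
    simp only [div_eq_mul_inv, mul_inv]
    ring
  -- Part B, outer integral
  have hFBd : HasDerivAt
      (fun w => (2*(Real.pi:ℂ)*Complex.I) * (-(w^3*(w+2*Λ))) / ((w - p*Λ) * (2*w+Λ)^2))
      ((2*(Real.pi:ℂ)*Complex.I) * (2*p-1) / (3*(p-1)^2)) Λ := by
    have hN : HasDerivAt (fun w : ℂ => (2*(Real.pi:ℂ)*Complex.I) * (-(w^3*(w+2*Λ))))
        ((2*(Real.pi:ℂ)*Complex.I) *
          (-((3:ℕ) * Λ^(3-1) * (Λ+2*Λ) + Λ^3 * 1))) Λ :=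
      (((hasDerivAt_pow 3 Λ).mul ((hasDerivAt_id Λ).add_const (2*Λ))).neg).const_mul _
    have hl1 : HasDerivAt (fun w : ℂ => w - p*Λ) (1 : ℂ) Λ := (hasDerivAt_id Λ).sub_const _
    have hl2 : HasDerivAt (fun w : ℂ => 2*w + Λ) (2 : ℂ) Λ := by
      simpa using ((hasDerivAt_id Λ).const_mul 2).add_const Λ
    have hD := hl1.mul (hl2.pow 2)
    have hDne : (Λ - p*Λ) * (2*Λ+Λ)^2 ≠ 0 := mul_ne_zero d3 (pow_ne_zero 2 d4)
    have h := hN.div hD hDne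
    refine HasDerivAt.congr_deriv h (Eq.symm ?_)
    dsimp only [Pi.mul_apply, Pi.pow_apply]
    rw [div_eq_div_iff (mul_ne_zero (by norm_num) (pow_ne_zero 2 hp1'))
      (pow_ne_zero 2 hDne)]
    push_cast
    ring
  have hFBdiff : ∀ z ∈ closedBall Λ r1, DifferentiableAt ℂ
      (fun w => (2*(Real.pi:ℂ)*Complex.I) * (-(w^3*(w+2*Λ))) / ((w - p*Λ) * (2*w+Λ)^2)) z := by
    intro z hz
    have hz' : ‖z - Λ‖ ≤ r1 := by rwa [mem_closedBall, dist_eq_norm] at hz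
    have q1 : z - p*Λ ≠ 0 := by
      refine nzlin1 (X := -(Λ*(p-1))) (-1) (z - Λ) (by ring) hz' ?_
      rw [hnm1, norm_neg]; linarith
    have q2 : 2*z + Λ ≠ 0 := by
      refine nzlin1 (X := 2*Λ + Λ) (-2) (z - Λ) (by ring) hz' ?_
      rw [hnm2, h3Λ]; linarith
    exact DifferentiableAt.div (by fun_prop) (by fun_prop)
      (mul_ne_zero q1 (pow_ne_zero 2 q2))
  have houterB : (∮ u1 in C(Λ, r1), (∮ u2 in C(Λ, r2), G u1 u2))
      = (2*(Real.pi:ℂ)*Complex.I) *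
        ((2*(Real.pi:ℂ)*Complex.I) * (2*p-1) / (3*(p-1)^2)) := by
    calc (∮ u1 in C(Λ, r1), (∮ u2 in C(Λ, r2), G u1 u2))
        = ∮ u1 in C(Λ, r1), ((u1 - Λ)^2)⁻¹ *
            ((2*(Real.pi:ℂ)*Complex.I) * (-(u1^3*(u1+2*Λ))) / ((u1 - p*Λ) * (2*u1+Λ)^2)) :=
          circleIntegral.integral_congr hr1.le (fun u1 hu1 => innerB u1 hu1)
      _ = (2*(Real.pi:ℂ)*Complex.I) * deriv
            (fun w => (2*(Real.pi:ℂ)*Complex.I) * (-(w^3*(w+2*Λ))) /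
              ((w - p*Λ) * (2*w+Λ)^2)) Λ := L2 hr1 hFBdiff
      _ = (2*(Real.pi:ℂ)*Complex.I) *
            ((2*(Real.pi:ℂ)*Complex.I) * (2*p-1) / (3*(p-1)^2)) := by rw [hFBd.deriv]
  rw [houterA, houterB]
  have hπ : (Real.pi : ℂ) ≠ 0 := Complex.ofReal_ne_zero.2 Real.pi_ne_zero
  have hX : (2*(Real.pi:ℂ)*Complex.I) ≠ 0 :=
    mul_ne_zero (mul_ne_zero two_ne_zero hπ) Complex.I_ne_zero
  have hb1 : ((2*p+1)^2*(p-1)^2 : ℂ) ≠ 0 :=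
    mul_ne_zero (pow_ne_zero 2 hp2) (pow_ne_zero 2 hp1')
  have hb2 : (3*(p-1)^2 : ℂ) ≠ 0 := mul_ne_zero (by norm_num) (pow_ne_zero 2 hp1')
  have hsum : -((p^3*(p+2)) / ((2*p+1)^2*(p-1)^2)) + (2*p-1)/(3*(p-1)^2) =
      -((p+1)*(3*p+1)) / (3*(2*p+1)^2) := by
    rw [← neg_div, div_add_div _ _ hb1 hb2, div_eq_div_iff (mul_ne_zero hb1 hb2)
      (mul_ne_zero three_ne_zero (pow_ne_zero 2 hp2))]
    ring
  rw [← hsum]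
  field_simp
end
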